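/- arXiv:1503.05690 — 7 statements merged into one kernel-verified Lean document; each statement's English description precedes it below -/
import Mathlib

section
/- Let f : 𝔻 → ℂ be holomorphic on the open unit disc with f(0) having positive imaginary part and Im f(q) > 0 for all q (i.e. f maps 𝔻 into the upper half-plane). Writing f(q) = ∑_{n≥0} B_n q^n, one has |B_n| ≤ 2·Im(B_0) for all n ≥ 1. -/
set_option maxHeartbeats 1000000

open Complex Metric intervalIntegral Set Real

private lemma caratheodory_aux (f : ℂ → ℂ)
    (hhol : DifferentiableOn ℂ f (Metric.ball (0 : ℂ) 1))
    (him : ∀ q ∈ Metric.ball (0 : ℂ) 1, 0 < (f q).im)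
    (n : ℕ) (hn : 1 ≤ n) (r : ℝ) (hr0 : 0 < r) (hr1 : r < 1) :
    ‖iteratedDeriv n f 0 / ((Nat.factorial n : ℕ) : ℂ)‖ * r ^ n ≤ 2 * (f 0).im := by
  set R : NNReal := ⟨r, hr0.le⟩ with hR
  have hRr : (R : ℝ) = r := rfl
  have hsub : Metric.closedBall (0:ℂ) r ⊆ Metric.ball 0 1 := closedBall_subset_ball hr1
  have hF : HasFPowerSeriesOnBall f (cauchyPowerSeries f 0 R) 0 R := by
    refine DifferentiableOn.hasFPowerSeriesOnBall ?_ (NNReal.coe_pos.1 hr0)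
    exact hhol.mono (by rw [hRr]; exact hsub)
  have hB : iteratedDeriv n f 0 / (n.factorial : ℂ) = cauchyPowerSeries f 0 R n (fun _ => (1:ℂ)) := by
    have h := hF.factorial_smul (1:ℂ) n
    rw [← iteratedDeriv_eq_iteratedFDeriv] at h
    rw [← h, nsmul_eq_mul]
    exact mul_div_cancel_left₀ _ (by exact_mod_cast n.factorial_ne_zero)
  set g : ℝ → ℂ := fun θ => f (circleMap 0 r θ) with hg
  have hmem : ∀ θ : ℝ, circleMap 0 r θ ∈ Metric.ball (0:ℂ) 1 := by
    intro θ
    simp [mem_ball, Complex.dist_eq, norm_circleMap_zero, abs_of_pos hr0, hr1]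
  have hne : ∀ θ : ℝ, circleMap 0 r θ ≠ 0 := fun θ => circleMap_ne_center hr0.ne'
  have hgc : Continuous g :=
    hhol.continuousOn.comp_continuous (continuous_circleMap 0 r) hmem
  have habs : ∀ θ : ℝ, ‖circleMap 0 r θ‖ = r := by
    intro θ; rw [norm_circleMap_zero, abs_of_pos hr0]
  -- mean value
  have hmean : (∫ θ in (0:ℝ)..(2*π), g θ) = 2 * π * f 0 := by
    have h0 := hF.coeff_zero (fun _ => (1:ℂ))
    rw [cauchyPowerSeries_apply] at h0
    rw [circleIntegral] at h0
    simp only [deriv_circleMap, hRr, sub_zero, pow_zero, one_smul, smul_eq_mul] at h0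
    have : (∫ θ in (0:ℝ)..(2*π), circleMap 0 r θ * I * (1 * ((circleMap 0 r θ)⁻¹ * g θ)))
        = ∫ θ in (0:ℝ)..(2*π), I * g θ := by
      refine intervalIntegral.integral_congr fun θ _ => ?_
      field_simp [hne θ]
    rw [this, intervalIntegral.integral_const_mul] at h0
    have h2 : (2 * ↑π * I : ℂ) ≠ 0 := by
      simp [Real.pi_ne_zero, Complex.I_ne_zero, Complex.ofReal_ne_zero]
    field_simp at h0
    exact h0
  have hgint : IntervalIntegrable g MeasureTheory.volume 0 (2*π) :=
    hgc.intervalIntegrable _ _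
  have hImint : (∫ θ in (0:ℝ)..(2*π), (g θ).im) = 2 * π * (f 0).im := by
    have h := Complex.imCLM.intervalIntegral_comp_comm hgint
    simp only [Complex.imCLM_apply] at h
    rw [h, hmean]
    simp
  -- orthogonality
  have horth : (∫ θ in (0:ℝ)..(2*π), (circleMap 0 r θ)^n * g θ) = 0 := by
    have hz : (∮ z in C(0, r), z^(n-1) * f z) = 0 := by
      refine circleIntegral_eq_zero_of_differentiable_on_off_countable hr0.le
        Set.countable_empty ?_ ?_
      · exact ((continuous_pow (n-1)).continuousOn.mul (hhol.continuousOn.mono hsub))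
      · intro z hz
        exact (differentiableAt_pow _).mul
          (hhol.differentiableAt (isOpen_ball.mem_nhds (ball_subset_ball hr1.le hz.1)))
    rw [circleIntegral] at hz
    simp only [deriv_circleMap, smul_eq_mul] at hz
    have he : (∫ θ in (0:ℝ)..(2*π), circleMap 0 r θ * I * ((circleMap 0 r θ)^(n-1) * g θ))
        = ∫ θ in (0:ℝ)..(2*π), I * ((circleMap 0 r θ)^n * g θ) := by
      refine intervalIntegral.integral_congr fun θ _ => ?_
      have : circleMap 0 r θ * (circleMap 0 r θ)^(n-1) = (circleMap 0 r θ)^n := by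
        rw [← pow_succ']
        congr 1
        omega
      rw [← this]; ring
    rw [he, intervalIntegral.integral_const_mul] at hz
    exact (mul_eq_zero.1 hz).resolve_left I_ne_zero
  have hpow : ∀ θ : ℝ, (starRingEnd ℂ) (circleMap 0 r θ) = ((r:ℂ))^2 * (circleMap 0 r θ)⁻¹ := by
    intro θ
    have h1 : circleMap 0 r θ * (starRingEnd ℂ) (circleMap 0 r θ) = ((r:ℂ))^2 := by
      rw [Complex.mul_conj, Complex.normSq_eq_norm_sq, habs θ]
      norm_cast
    field_simp [hne θ]
    rw [← h1]; ring
  have horthc : (∫ θ in (0:ℝ)..(2*π), ((circleMap 0 r θ)⁻¹)^n * (starRingEnd ℂ) (g θ)) = 0 := by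
    have hc : (∫ θ in (0:ℝ)..(2*π), (starRingEnd ℂ) ((circleMap 0 r θ)^n * g θ)) = 0 := by
      have hi : IntervalIntegrable (fun θ : ℝ => (circleMap 0 r θ)^n * g θ)
          MeasureTheory.volume 0 (2*π) :=
        (((continuous_circleMap 0 r).pow n).mul hgc).intervalIntegrable 0 (2*π)
      have h := Complex.conjCLE.toContinuousLinearMap.intervalIntegral_comp_comm hi
      simpa [horth] using h
    have he : (∫ θ in (0:ℝ)..(2*π), (starRingEnd ℂ) ((circleMap 0 r θ)^n * g θ))
        = ((r:ℂ)^2)^n * ∫ θ in (0:ℝ)..(2*π), ((circleMap 0 r θ)⁻¹)^n * (starRingEnd ℂ) (g θ) := by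
      rw [← intervalIntegral.integral_const_mul]
      refine intervalIntegral.integral_congr fun θ _ => ?_
      rw [map_mul, map_pow, hpow θ]
      ring
    rw [he] at hc
    have hr2 : ((r:ℂ)^2)^n ≠ 0 :=
      pow_ne_zero _ (pow_ne_zero _ (Complex.ofReal_ne_zero.2 hr0.ne'))
    exact (mul_eq_zero.1 hc).resolve_left hr2
  have hcoeff : cauchyPowerSeries f 0 R n (fun _ => (1:ℂ))
      = (2*(π:ℂ))⁻¹ * ∫ θ in (0:ℝ)..(2*π), ((circleMap 0 r θ)⁻¹)^n * g θ := by
    rw [cauchyPowerSeries_apply, circleIntegral]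
    simp only [deriv_circleMap, hRr, sub_zero, smul_eq_mul]
    have he : (∫ θ in (0:ℝ)..(2*π), circleMap 0 r θ * I *
          ((1 / circleMap 0 r θ)^n * ((circleMap 0 r θ)⁻¹ * g θ)))
        = ∫ θ in (0:ℝ)..(2*π), I * (((circleMap 0 r θ)⁻¹)^n * g θ) := by
      refine intervalIntegral.integral_congr fun θ _ => ?_
      field_simp [hne θ]
    rw [he, intervalIntegral.integral_const_mul, ← mul_assoc]
    congr 1
    have h2 : (2 * (π:ℂ)) ≠ 0 := by
      simp [Real.pi_ne_zero, Complex.ofReal_ne_zero]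
    rw [mul_inv, mul_assoc, inv_mul_cancel₀ Complex.I_ne_zero, mul_one]
  set J := ∫ θ in (0:ℝ)..(2*π), ((circleMap 0 r θ)⁻¹)^n * g θ with hJdef
  have hJ2 : J = ∫ θ in (0:ℝ)..(2*π), ((circleMap 0 r θ)⁻¹)^n * (2 * (g θ).im * I) := by
    have hint1 : IntervalIntegrable (fun θ => ((circleMap 0 r θ)⁻¹)^n * g θ)
        MeasureTheory.volume 0 (2*π) :=
      ((((continuous_circleMap 0 r).inv₀ hne).pow n).mul hgc).intervalIntegrable 0 (2*π)
    have hint2 : IntervalIntegrable (fun θ => ((circleMap 0 r θ)⁻¹)^n * (starRingEnd ℂ) (g θ))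
        MeasureTheory.volume 0 (2*π) :=
      ((((continuous_circleMap 0 r).inv₀ hne).pow n).mul
        (Complex.continuous_conj.comp hgc)).intervalIntegrable 0 (2*π)
    have key : (∫ θ in (0:ℝ)..(2*π), ((circleMap 0 r θ)⁻¹)^n * (2 * (g θ).im * I))
        = (∫ θ in (0:ℝ)..(2*π), ((circleMap 0 r θ)⁻¹)^n * g θ)
          - ∫ θ in (0:ℝ)..(2*π), ((circleMap 0 r θ)⁻¹)^n * (starRingEnd ℂ) (g θ) := by
      rw [← intervalIntegral.integral_sub hint1 hint2]
      refine intervalIntegral.integral_congr fun θ _ => ?_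
      rw [← mul_sub, Complex.sub_conj]
      push_cast
      ring
    rw [key, horthc, sub_zero, hJdef]
  have hJnorm : ‖J‖ ≤ r⁻¹^n * (2 * (2 * π * (f 0).im)) := by
    rw [hJ2]
    have h1 : ‖∫ θ in (0:ℝ)..(2*π), ((circleMap 0 r θ)⁻¹)^n * (2 * (g θ).im * I)‖
        ≤ ∫ θ in (0:ℝ)..(2*π), ‖((circleMap 0 r θ)⁻¹)^n * (2 * (g θ).im * I)‖ :=
      intervalIntegral.norm_integral_le_integral_norm (by positivity)
    refine h1.trans ?_
    have h2 : (∫ θ in (0:ℝ)..(2*π), ‖((circleMap 0 r θ)⁻¹)^n * (2 * (g θ).im * I)‖)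
        = ∫ θ in (0:ℝ)..(2*π), r⁻¹^n * (2 * (g θ).im) := by
      refine intervalIntegral.integral_congr fun θ _ => ?_
      have him' : 0 < (g θ).im := him _ (hmem θ)
      rw [norm_mul, norm_pow, norm_inv, habs θ]
      rw [norm_mul, norm_mul, Complex.norm_I, mul_one, Complex.norm_ofNat,
        Complex.norm_real, Real.norm_eq_abs, abs_of_pos him']
    rw [h2, intervalIntegral.integral_const_mul, intervalIntegral.integral_const_mul, hImint]
  have hfinal : ‖iteratedDeriv n f 0 / (n.factorial : ℂ)‖ ≤ 2 * (f 0).im * r⁻¹^n := by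
    rw [hB, hcoeff, norm_mul]
    have : ‖(2*(π:ℂ))⁻¹‖ = (2*π)⁻¹ := by
      rw [norm_inv, norm_mul, Complex.norm_ofNat, Complex.norm_real, Real.norm_eq_abs,
        abs_of_pos Real.pi_pos]
    rw [this]
    calc (2*π)⁻¹ * ‖J‖ ≤ (2*π)⁻¹ * (r⁻¹^n * (2 * (2 * π * (f 0).im))) := by
          exact mul_le_mul_of_nonneg_left hJnorm (by positivity)
      _ = 2 * (f 0).im * r⁻¹^n := by
          field_simp
  calc ‖iteratedDeriv n f 0 / (n.factorial : ℂ)‖ * r ^ n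
      ≤ (2 * (f 0).im * r⁻¹^n) * r ^ n := by
        refine mul_le_mul_of_nonneg_right hfinal (by positivity)
    _ = 2 * (f 0).im := by
        rw [mul_assoc, ← mul_pow, inv_mul_cancel₀ hr0.ne', one_pow, mul_one]

/-- Carathéodory's coefficient estimate: if `f` is holomorphic on the open unit disc
with values in the upper half-plane, and `B n = iteratedDeriv n f 0 / n!` are its
Taylor coefficients at `0`, then `|B n| ≤ 2 Im (B 0) = 2 Im (f 0)` for all `n ≥ 1`. -/
theorem stmt_1 (f : ℂ → ℂ)
    (hhol : DifferentiableOn ℂ f (Metric.ball (0 : ℂ) 1))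
    (him : ∀ q ∈ Metric.ball (0 : ℂ) 1, 0 < (f q).im) :
    ∀ n : ℕ, 1 ≤ n → ‖iteratedDeriv n f 0 / ((Nat.factorial n : ℕ) : ℂ)‖ ≤ 2 * (f 0).im := by
  intro n hn
  set B := ‖iteratedDeriv n f 0 / ((Nat.factorial n : ℕ) : ℂ)‖ with hBdef
  have ht : Filter.Tendsto (fun r : ℝ => B * r ^ n) (nhdsWithin 1 (Set.Iio 1))
      (nhds (B * 1 ^ n)) :=
    ((continuous_const.mul (continuous_pow n)).tendsto 1).mono_left nhdsWithin_le_nhds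
  have hev : ∀ᶠ r : ℝ in nhdsWithin 1 (Set.Iio 1), B * r ^ n ≤ 2 * (f 0).im := by
    filter_upwards [Ioo_mem_nhdsLT_of_mem (show (1:ℝ) ∈ Set.Ioc 0 1 by norm_num)] with r hr
    exact caratheodory_aux f hhol him n hn r hr.1 hr.2
  have := le_of_tendsto ht hev
  simpa using this
end

section
/- Let F(x,y) = A x² + B x y + C y² be a positive definite real binary quadratic form that is reduced, i.e. C ≥ A ≥ |B| > 0 or C ≥ A ≥ |B| with A > 0. Then the minimum of F over the coset {(x,y) ∈ ℤ² : x odd, y even} equals A and is attained only at (±1, 0), and the minimum over {(x,y) : x even, y odd} equals C and is attained only at (0, ±1). -/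
/-- The real binary quadratic form `A x² + B x y + C y²` evaluated at integers. -/
def binQF (A B C : ℝ) (x y : ℤ) : ℝ :=
  A * (x : ℝ) ^ 2 + B * (x : ℝ) * (y : ℝ) + C * (y : ℝ) ^ 2

lemma binQF_gt (A B C : ℝ) (hA : 0 < A) (hBA : |B| ≤ A) (hAC : A ≤ C)
    (x y : ℤ) (hx : 1 ≤ |x|) (hy : 1 ≤ |y|) (hxy : 2 ≤ |x| * |y|) :
    C < binQF A B C x y := by
  have ha : (1:ℝ) ≤ |(x:ℝ)| := by rw [← Int.cast_abs]; exact_mod_cast hx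
  have hb : (1:ℝ) ≤ |(y:ℝ)| := by rw [← Int.cast_abs]; exact_mod_cast hy
  have hab : (2:ℝ) ≤ |(x:ℝ)| * |(y:ℝ)| := by
    have h : (2:ℤ) ≤ |x * y| := by rw [abs_mul]; exact hxy
    calc (2:ℝ) ≤ ((|x * y| : ℤ) : ℝ) := by exact_mod_cast h
      _ = |(x:ℝ)| * |(y:ℝ)| := by push_cast [abs_mul]; ring
  have hcross : -(A * (|(x:ℝ)| * |(y:ℝ)|)) ≤ B * x * y := by
    have h1 : |B * x * y| ≤ A * (|(x:ℝ)| * |(y:ℝ)|) := by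
      rw [abs_mul, abs_mul, ← mul_assoc]
      gcongr
    linarith [neg_abs_le (B * (x:ℝ) * y)]
  have hx2 : (x:ℝ)^2 = |(x:ℝ)|^2 := (sq_abs _).symm
  have hy2 : (y:ℝ)^2 = |(y:ℝ)|^2 := (sq_abs _).symm
  unfold binQF
  rw [hx2, hy2]
  nlinarith [sq_nonneg (|(x:ℝ)| - |(y:ℝ)|),
    mul_nonneg (sub_nonneg.2 hAC) (by nlinarith : (0:ℝ) ≤ |(y:ℝ)|^2 - 1),
    mul_pos hA (by nlinarith : (0:ℝ) < |(x:ℝ)| * |(y:ℝ)| - 1)]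

/-- For a reduced positive definite real binary quadratic form `[A,B,C]`
(`C ≥ A ≥ |B|`, `A > 0`), the minimum on the coset (odd, even) of `2ℤ²` in `ℤ²`
is `A`, attained only at `(±1, 0)`, and the minimum on the coset (even, odd)
is `C`, attained only at `(0, ±1)`. -/
theorem stmt_4 (A B C : ℝ) (hA : 0 < A) (hBA : |B| ≤ A) (hAC : A ≤ C)
    (hposdef : B ^ 2 < 4 * A * C) :
    ((∀ x y : ℤ, Odd x → Even y → A ≤ binQF A B C x y) ∧
      (∀ x y : ℤ, Odd x → Even y → binQF A B C x y = A → (x = 1 ∨ x = -1) ∧ y = 0)) ∧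
    ((∀ x y : ℤ, Even x → Odd y → C ≤ binQF A B C x y) ∧
      (∀ x y : ℤ, Even x → Odd y → binQF A B C x y = C → x = 0 ∧ (y = 1 ∨ y = -1))) := by
  -- generic facts
  have oddabs : ∀ z : ℤ, Odd z → 1 ≤ |z| := by
    intro z hz
    refine Int.one_le_abs ?_
    rcases hz with ⟨k, hk⟩
    omega
  have evenabs : ∀ z : ℤ, Even z → z ≠ 0 → 2 ≤ |z| := by
    intro z hz hz0
    rcases hz with ⟨k, hk⟩
    subst hk
    have hk0 : k ≠ 0 := by omega
    have h1 : 1 ≤ |k| := Int.one_le_abs hk0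
    have h2 : |k + k| = 2 * |k| := by rw [← two_mul, abs_mul]; norm_num
    omega
  have hgt1 : ∀ x y : ℤ, Odd x → Even y → y ≠ 0 → C < binQF A B C x y := by
    intro x y hx hy hy0
    have h1 := oddabs x hx
    have h2 := evenabs y hy hy0
    exact binQF_gt A B C hA hBA hAC x y h1 (by omega) (by nlinarith)
  have hgt2 : ∀ x y : ℤ, Even x → Odd y → x ≠ 0 → C < binQF A B C x y := by
    intro x y hx hy hx0
    have h1 := evenabs x hx hx0
    have h2 := oddabs y hy
    exact binQF_gt A B C hA hBA hAC x y (by omega) h2 (by nlinarith)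
  have hy0val : ∀ x : ℤ, binQF A B C x 0 = A * (x:ℝ)^2 := by
    intro x; unfold binQF; push_cast; ring
  have hx0val : ∀ y : ℤ, binQF A B C 0 y = C * (y:ℝ)^2 := by
    intro y; unfold binQF; push_cast; ring
  refine ⟨⟨?_, ?_⟩, ?_, ?_⟩
  · intro x y hx hy
    by_cases hy0 : y = 0
    · subst hy0
      rw [hy0val]
      have hx0 : x ≠ 0 := by rcases hx with ⟨k, hk⟩; omega
      have : (1:ℝ) ≤ (x:ℝ)^2 := by
        have h3 : (0:ℤ) < x^2 := by positivity
        have h4 : (1:ℤ) ≤ x^2 := h3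
        exact_mod_cast h4
      nlinarith
    · linarith [hgt1 x y hx hy hy0]
  · intro x y hx hy heq
    by_cases hy0 : y = 0
    · subst hy0
      rw [hy0val] at heq
      have hxx : (x:ℝ)^2 = 1 := by
        have := mul_left_cancel₀ (ne_of_gt hA) (show A * (x:ℝ)^2 = A * 1 by linarith)
        linarith
      have hxz : x^2 = 1 := by exact_mod_cast hxx
      refine ⟨?_, rfl⟩
      exact mul_self_eq_one_iff.mp (by linear_combination hxz)
    · exact absurd heq (ne_of_gt (by linarith [hgt1 x y hx hy hy0]))
  · intro x y hx hy
    by_cases hx0 : x = 0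
    · subst hx0
      rw [hx0val]
      have hy0 : y ≠ 0 := by rcases hy with ⟨k, hk⟩; omega
      have : (1:ℝ) ≤ (y:ℝ)^2 := by
        have h3 : (0:ℤ) < y^2 := by positivity
        have h4 : (1:ℤ) ≤ y^2 := h3
        exact_mod_cast h4
      nlinarith [lt_of_lt_of_le hA hAC]
    · exact le_of_lt (hgt2 x y hx hy hx0)
  · intro x y hx hy heq
    by_cases hx0 : x = 0
    · subst hx0
      rw [hx0val] at heq
      have hC : 0 < C := lt_of_lt_of_le hA hAC
      have hyy : (y:ℝ)^2 = 1 := by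
        have := mul_left_cancel₀ (ne_of_gt hC) (show C * (y:ℝ)^2 = C * 1 by linarith)
        linarith
      have hyz : y^2 = 1 := by exact_mod_cast hyy
      exact ⟨rfl, mul_self_eq_one_iff.mp (by linear_combination hyz)⟩
    · exact absurd heq (ne_of_gt (hgt2 x y hx hy hx0))
end

section
/- A reduced positive definite real binary quadratic form F = [A,B,C] (with C ≥ A ≥ |B|, A > 0) attains its minimum on the coset {(x,y) ∈ ℤ² : x odd, y odd} more than twice (counting ±(x,y) as one) if and only if B = 0; in that case the minimum on this coset is A + C, attained exactly at (±1, ±1), and equals the sum of the minima A and C on the other two nontrivial cosets of 2ℤ² in ℤ². -/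
lemma odd_one_le_sq (x : ℤ) (hx : Odd x) : 1 ≤ ((x : ℝ)) ^ 2 := by
  have h0 : x ≠ 0 := by rcases hx with ⟨k, hk⟩; omega
  have h1 : (1 : ℤ) ≤ x ^ 2 := by nlinarith [Int.one_le_abs h0, abs_nonneg x, sq_abs x]
  exact_mod_cast h1

lemma odd_one_le_abs (x : ℤ) (hx : Odd x) : 1 ≤ |(x : ℝ)| := by
  have h0 : x ≠ 0 := by rcases hx with ⟨k, hk⟩; omega
  have h1 : (1 : ℤ) ≤ |x| := Int.one_le_abs h0
  calc (1:ℝ) = ((1:ℤ):ℝ) := by norm_num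
  _ ≤ ((|x| : ℤ) : ℝ) := by exact_mod_cast h1
  _ = |(x:ℝ)| := by push_cast [Int.cast_abs]; ring

lemma bqf_lb (A B C : ℝ) (hA : 0 < A) (hBA : |B| ≤ A) (hAC : A ≤ C)
    (x y : ℤ) (hx : Odd x) (hy : Odd y) :
    A - |B| + C ≤ binQF A B C x y := by
  have hu := odd_one_le_abs x hx
  have hv := odd_one_le_abs y hy
  have hB : -(|B| * |(x:ℝ)| * |(y:ℝ)|) ≤ B * x * y := by
    have := neg_abs_le (B * (x:ℝ) * (y:ℝ))
    rwa [abs_mul, abs_mul] at this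
  have hux : |(x:ℝ)|^2 = (x:ℝ)^2 := sq_abs _
  have hvy : |(y:ℝ)|^2 = (y:ℝ)^2 := sq_abs _
  have hBnn := abs_nonneg B
  unfold binQF
  have huv : 1 ≤ |(x:ℝ)| * |(y:ℝ)| := by nlinarith
  have hv2 : 1 ≤ |(y:ℝ)|^2 := by nlinarith
  nlinarith [sq_nonneg (|(x:ℝ)| - |(y:ℝ)|),
    mul_nonneg (sub_nonneg.2 hAC) (sub_nonneg.2 hv2),
    mul_nonneg (sub_nonneg.2 hBA) (sub_nonneg.2 huv)]

lemma bqf_eq_case (A B C : ℝ) (hA : 0 < A) (hBA : |B| ≤ A) (hAC : A ≤ C)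
    (x y : ℤ) (hx : Odd x) (hy : Odd y)
    (heq : binQF A B C x y = A - |B| + C) :
    (x = 1 ∨ x = -1) ∧ (y = 1 ∨ y = -1) ∧ B * x * y = -|B| := by
  have hu := odd_one_le_abs x hx
  have hv := odd_one_le_abs y hy
  set u := |(x:ℝ)| with hudef
  set v := |(y:ℝ)| with hvdef
  have hB : -(|B| * u * v) ≤ B * x * y := by
    have := neg_abs_le (B * (x:ℝ) * (y:ℝ))
    rwa [abs_mul, abs_mul] at this
  have hux : u^2 = (x:ℝ)^2 := sq_abs _
  have hvy : v^2 = (y:ℝ)^2 := sq_abs _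
  have hBnn := abs_nonneg B
  have huv : 1 ≤ u * v := by nlinarith
  have hv2 : 1 ≤ v^2 := by nlinarith
  -- G := A u² - |B| u v + C v² ≤ A - |B| + C
  have hB' : -(|B| * (u*v)) ≤ B * x * y := by rw [← mul_assoc]; exact hB
  have hG : A * u^2 - |B| * (u*v) + C * v^2 ≤ A - |B| + C := by
    unfold binQF at heq; rw [hux, hvy]; linarith
  -- decomposition forces u = v and u*v = 1
  have hkey : A * (u - v)^2 + A * (u*v - 1) ≤ 0 := by
    nlinarith [mul_nonneg (sub_nonneg.2 hAC) (sub_nonneg.2 hv2),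
      mul_nonneg (sub_nonneg.2 hBA) (sub_nonneg.2 huv)]
  have n1 : 0 ≤ A * (u - v)^2 := mul_nonneg hA.le (sq_nonneg _)
  have n2 : 0 ≤ A * (u*v - 1) := mul_nonneg hA.le (by linarith)
  have e1 : A * (u - v)^2 = 0 := by linarith
  have e2 : A * (u*v - 1) = 0 := by linarith
  have huveq : u = v := by
    have h := (mul_eq_zero.1 e1).resolve_left (ne_of_gt hA)
    have := sq_eq_zero_iff.1 h
    linarith
  have huv1 : u * v = 1 := by
    have h := (mul_eq_zero.1 e2).resolve_left (ne_of_gt hA); linarith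
  have hvv : v * v = 1 := huveq ▸ huv1
  have hv1 : v = 1 := by
    have h2 : (v - 1) * (v + 1) = 0 := by linear_combination hvv
    rcases mul_eq_zero.1 h2 with h | h
    · linarith
    · linarith
  have hu1 : u = 1 := by rw [huveq, hv1]
  have hxabs : |x| = 1 := by
    have : ((|x| : ℤ) : ℝ) = 1 := by rw [Int.cast_abs]; exact hu1
    exact_mod_cast this
  have hyabs : |y| = 1 := by
    have : ((|y| : ℤ) : ℝ) = 1 := by rw [Int.cast_abs]; exact hv1
    exact_mod_cast this
  refine ⟨(abs_eq (by norm_num)).1 hxabs, (abs_eq (by norm_num)).1 hyabs, ?_⟩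
  have hx2 : (x:ℝ)^2 = 1 := by rw [← hux, hu1]; norm_num
  have hy2 : (y:ℝ)^2 = 1 := by rw [← hvy, hv1]; norm_num
  unfold binQF at heq
  rw [hx2, hy2] at heq
  linarith

lemma bqf0_lb (A C : ℝ) (hA : 0 < A) (hAC : A ≤ C)
    (x y : ℤ) (hx : Odd x) (hy : Odd y) : A + C ≤ binQF A 0 C x y := by
  have hx2 := odd_one_le_sq x hx
  have hy2 := odd_one_le_sq y hy
  unfold binQF
  nlinarith

lemma bqf0_eq (A C : ℝ) (hA : 0 < A) (hAC : A ≤ C)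
    (x y : ℤ) (hx : Odd x) (hy : Odd y) :
    binQF A 0 C x y = A + C ↔ (x = 1 ∨ x = -1) ∧ (y = 1 ∨ y = -1) := by
  have hx2 := odd_one_le_sq x hx
  have hy2 := odd_one_le_sq y hy
  have hC : 0 < C := lt_of_lt_of_le hA hAC
  constructor
  · intro h
    unfold binQF at h
    have n1 : 0 ≤ A * ((x:ℝ)^2 - 1) := mul_nonneg hA.le (by linarith)
    have n2 : 0 ≤ C * ((y:ℝ)^2 - 1) := mul_nonneg hC.le (by linarith)
    have e1 : A * ((x:ℝ)^2 - 1) = 0 := by linarith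
    have e2 : C * ((y:ℝ)^2 - 1) = 0 := by linarith
    have hx1 : ((x:ℝ))^2 = 1 := by
      have := (mul_eq_zero.1 e1).resolve_left (ne_of_gt hA); linarith
    have hy1 : ((y:ℝ))^2 = 1 := by
      have := (mul_eq_zero.1 e2).resolve_left (ne_of_gt hC); linarith
    have hx1' : x^2 = 1 := by exact_mod_cast hx1
    have hy1' : y^2 = 1 := by exact_mod_cast hy1
    constructor
    · have h2 : (x - 1) * (x + 1) = 0 := by linear_combination hx1'
      rcases mul_eq_zero.1 h2 with h | h
      · left; omega
      · right; omega
    · have h2 : (y - 1) * (y + 1) = 0 := by linear_combination hy1'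
      rcases mul_eq_zero.1 h2 with h | h
      · left; omega
      · right; omega
  · rintro ⟨hx1 | hx1, hy1 | hy1⟩ <;> subst hx1 <;> subst hy1 <;>
      unfold binQF <;> push_cast <;> ring

/-- A reduced positive definite real binary quadratic form `[A,B,C]` attains its
minimum on the coset (odd, odd) of `2ℤ²` more than twice (counting `±(x,y)` as one)
if and only if `B = 0`; in that case the minimum on this coset is `A + C`,
attained exactly at `(±1, ±1)`. -/
theorem stmt_5 (A B C : ℝ) (hA : 0 < A) (hBA : |B| ≤ A) (hAC : A ≤ C)
    (hposdef : B ^ 2 < 4 * A * C) :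
    ((∃ p q : ℤ × ℤ, Odd p.1 ∧ Odd p.2 ∧ Odd q.1 ∧ Odd q.2 ∧
        (∀ x y : ℤ, Odd x → Odd y → binQF A B C p.1 p.2 ≤ binQF A B C x y) ∧
        binQF A B C q.1 q.2 = binQF A B C p.1 p.2 ∧
        q ≠ p ∧ q ≠ (-p.1, -p.2)) ↔ B = 0) ∧
    (B = 0 →
      (∀ x y : ℤ, Odd x → Odd y → A + C ≤ binQF A B C x y) ∧
      (∀ x y : ℤ, Odd x → Odd y →
        (binQF A B C x y = A + C ↔ (x = 1 ∨ x = -1) ∧ (y = 1 ∨ y = -1)))) := by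
  have hodd1 : Odd (1 : ℤ) := odd_one
  have hoddm1 : Odd (-1 : ℤ) := ⟨-1, by ring⟩
  constructor
  · constructor
    · rintro ⟨⟨p1, p2⟩, ⟨q1, q2⟩, hp1, hp2, hq1, hq2, hmin, heqq, hqp, hqnp⟩
      simp only at hp1 hp2 hq1 hq2 hmin heqq hqp hqnp
      by_contra hB0
      -- the minimum is A - |B| + C
      have hle : binQF A B C p1 p2 ≤ A - |B| + C := by
        rcases abs_cases B with ⟨hB, _⟩ | ⟨hB, _⟩
        · have := hmin 1 (-1) hodd1 hoddm1
          unfold binQF at this ⊢; push_cast at this; rw [hB]; linarith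
        · have := hmin 1 1 hodd1 hodd1
          unfold binQF at this ⊢; push_cast at this; rw [hB]; linarith
      have hge := bqf_lb A B C hA hBA hAC p1 p2 hp1 hp2
      have heqp : binQF A B C p1 p2 = A - |B| + C := le_antisymm hle hge
      have heqq' : binQF A B C q1 q2 = A - |B| + C := by rw [heqq]; exact heqp
      obtain ⟨hpx, hpy, hpB⟩ := bqf_eq_case A B C hA hBA hAC p1 p2 hp1 hp2 heqp
      obtain ⟨hqx, hqy, hqB⟩ := bqf_eq_case A B C hA hBA hAC q1 q2 hq1 hq2 heqq'
      -- B * p1 * p2 = B * q1 * q2, B ≠ 0 ⟹ p1*p2 = q1*q2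
      have hRR : B * ((p1 : ℝ) * p2) = B * ((q1 : ℝ) * q2) := by
        rw [← mul_assoc, ← mul_assoc, hpB, hqB]
      have hpq : (p1 : ℝ) * p2 = (q1 : ℝ) * q2 := mul_left_cancel₀ hB0 hRR
      have hpqz : p1 * p2 = q1 * q2 := by exact_mod_cast hpq
      rcases hpx with h1 | h1 <;> rcases hpy with h2 | h2 <;>
        rcases hqx with h3 | h3 <;> rcases hqy with h4 | h4 <;>
          subst h1 <;> subst h2 <;> subst h3 <;> subst h4 <;>
          first | omega | exact hqp rfl | exact hqnp (by norm_num)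
    · intro hB
      subst hB
      refine ⟨(1, 1), (1, -1), hodd1, hodd1, hodd1, hoddm1, ?_, ?_, ?_, ?_⟩
      · intro x y hx hy
        have := bqf0_lb A C hA hAC x y hx hy
        have h11 : binQF A 0 C 1 1 = A + C := by unfold binQF; push_cast; ring
        simpa only [h11] using this
      · unfold binQF; push_cast; ring
      · simp
      · simp
  · intro hB
    subst hB
    exact ⟨fun x y hx hy => bqf0_lb A C hA hAC x y hx hy,
      fun x y hx hy => bqf0_eq A C hA hAC x y hx hy⟩
end

section
/- A positive definite real binary quadratic form is multiminimizing (attains its minimum on some nontrivial coset of 2ℤ² more than twice up to sign) if and only if it is SL(2,ℤ)-equivalent to a diagonal form A x² + C y². -/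
lemma posdefR (A B C : ℝ) (hA : 0 < A) (hposdef : B ^ 2 < 4 * A * C)
    (x y : ℝ) (hxy : ¬(x = 0 ∧ y = 0)) :
    0 < A * x ^ 2 + B * x * y + C * y ^ 2 := by
  by_cases hy : y = 0
  · have hx : x ≠ 0 := fun h => hxy ⟨h, hy⟩
    subst hy
    have : 0 < x ^ 2 := by positivity
    nlinarith
  · have h1 : 0 < (2*A*x + B*y)^2 + (4*A*C - B^2) * y^2 := by
      have : 0 < (4*A*C - B^2) * y^2 := by
        apply mul_pos (by linarith) (by positivity)
      nlinarith [sq_nonneg (2*A*x + B*y)]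
    nlinarith
lemma key_pos (D : ℤ) (hD : 0 < D) (sn : ℤ) :
    ∃ j : ℤ, (D + 2*sn - 2*j*D)^2 ≤ D^2 ∧ ((D + 2*sn - 2*j*D)^2 = D^2 → D ∣ sn) := by
  refine ⟨sn / D + 1, ?_⟩
  have h1 := Int.mul_ediv_add_emod sn D
  have h2 : 0 ≤ sn % D := Int.emod_nonneg sn hD.ne'
  have h3 : sn % D < D := Int.emod_lt_of_pos sn hD
  set r := sn % D with hr
  set q := sn / D with hq
  have hN : D + 2*sn - 2*(q+1)*D = 2*r - D := by linear_combination -2*h1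
  rw [hN]
  constructor
  · nlinarith [mul_nonneg h2 (by omega : (0:ℤ) ≤ D - r)]
  · intro heq
    rcases h2.eq_or_lt with h | h
    · exact ⟨q, by linarith⟩
    · exfalso; nlinarith

lemma key (D : ℤ) (hD : D ≠ 0) (sn : ℤ) :
    ∃ j : ℤ, (D + 2*sn - 2*j*D)^2 ≤ D^2 ∧ ((D + 2*sn - 2*j*D)^2 = D^2 → D ∣ sn) := by
  rcases hD.lt_or_gt with h | h
  · obtain ⟨j, h1, h2⟩ := key_pos (-D) (by omega) (-sn)
    refine ⟨j, ?_, ?_⟩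
    · have e1 : (D + 2*sn - 2*j*D)^2 = ((-D) + 2*(-sn) - 2*j*(-D))^2 := by ring
      have e2 : ((-D):ℤ)^2 = D^2 := by ring
      rw [e1]; rw [e2] at h1; exact h1
    · intro heq
      have e1 : ((-D) + 2*(-sn) - 2*j*(-D))^2 = (-D)^2 := by
        rw [(by ring : ((-D) + 2*(-sn) - 2*j*(-D))^2 = (D + 2*sn - 2*j*D)^2),
            (by ring : ((-D):ℤ)^2 = D^2)]; exact heq
      have := h2 e1
      exact dvd_neg.mp (neg_dvd.mp this)
  · exact key_pos D h sn
lemma aux_contra (A B C : ℝ) (e p : ℤ × ℤ) (u1 u2 v1 v2 w1 w2 : ℤ)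
    (hp1 : p.1 = u1 + v1) (hp2 : p.2 = u2 + v2)
    (hpe1 : Even (p.1 - e.1)) (hpe2 : Even (p.2 - e.2))
    (hmin : ∀ x y : ℤ, Even (x - e.1) → Even (y - e.2) →
      binQF A B C p.1 p.2 ≤ binQF A B C x y)
    (hG : 2*A*(u1:ℝ)*v1 + B*((u1:ℝ)*v2 + (u2:ℝ)*v1) + 2*C*(u2:ℝ)*v2 = 0)
    (hm : binQF A B C p.1 p.2 = binQF A B C u1 u2 + binQF A B C v1 v2)
    (ha : 0 < binQF A B C u1 u2) (hb : 0 < binQF A B C v1 v2)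
    (hD0 : u1*v2 - u2*v1 ≠ 0)
    (hndvd : ¬((u1*v2 - u2*v1) ∣ (w1*v2 - w2*v1) ∧ (u1*v2 - u2*v1) ∣ (u1*w2 - u2*w1))) :
    False := by
  set D : ℤ := u1*v2 - u2*v1 with hD_def
  set sn : ℤ := w1*v2 - w2*v1 with hsn_def
  set tn : ℤ := u1*w2 - u2*w1 with htn_def
  obtain ⟨j, hj, hjeq⟩ := key D hD0 sn
  obtain ⟨k, hk, hkeq⟩ := key D hD0 tn
  set N1 : ℤ := D + 2*sn - 2*j*D with hN1_def
  set N2 : ℤ := D + 2*tn - 2*k*D with hN2_def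
  set z1 : ℤ := p.1 + 2*w1 - 2*j*u1 - 2*k*v1 with hz1_def
  set z2 : ℤ := p.2 + 2*w2 - 2*j*u2 - 2*k*v2 with hz2_def
  -- Cramer identities
  have hcram1 : D*w1 = sn*u1 + tn*v1 := by rw [hD_def, hsn_def, htn_def]; ring
  have hcram2 : D*w2 = sn*u2 + tn*v2 := by rw [hD_def, hsn_def, htn_def]; ring
  have hz1 : D*z1 = N1*u1 + N2*v1 := by
    rw [hz1_def, hN1_def, hN2_def]; linear_combination (D:ℤ)*hp1 + 2*hcram1
  have hz2 : D*z2 = N1*u2 + N2*v2 := by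
    rw [hz2_def, hN1_def, hN2_def]; linear_combination (D:ℤ)*hp2 + 2*hcram2
  -- parity of z
  have hze1 : Even (z1 - e.1) := by
    have : z1 - e.1 = (p.1 - e.1) + 2*(w1 - j*u1 - k*v1) := by rw [hz1_def]; ring
    rw [this]; exact hpe1.add (even_two_mul _)
  have hze2 : Even (z2 - e.2) := by
    have : z2 - e.2 = (p.2 - e.2) + 2*(w2 - j*u2 - k*v2) := by rw [hz2_def]; ring
    rw [this]; exact hpe2.add (even_two_mul _)
  have hmle := hmin z1 z2 hze1 hze2
  -- value of F at z
  have hz1R : (D:ℝ)*(z1:ℝ) = (N1:ℝ)*(u1:ℝ) + (N2:ℝ)*(v1:ℝ) := by exact_mod_cast congrArg (Int.cast : ℤ → ℝ) hz1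
  have hz2R : (D:ℝ)*(z2:ℝ) = (N1:ℝ)*(u2:ℝ) + (N2:ℝ)*(v2:ℝ) := by exact_mod_cast congrArg (Int.cast : ℤ → ℝ) hz2
  have hFz : (D:ℝ)^2 * binQF A B C z1 z2
      = (N1:ℝ)^2 * binQF A B C u1 u2 + (N2:ℝ)^2 * binQF A B C v1 v2 := by
    simp only [binQF]
    linear_combination (A*((D:ℝ)*z1 + ((N1:ℝ)*u1 + (N2:ℝ)*v1)) + B*((D:ℝ)*z2)) * hz1R
      + (B*((N1:ℝ)*u1 + (N2:ℝ)*v1) + C*((D:ℝ)*z2 + ((N1:ℝ)*u2 + (N2:ℝ)*v2))) * hz2R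
      + ((N1:ℝ)*(N2:ℝ)) * hG
  -- strictness
  have hstrict : N1^2 < D^2 ∨ N2^2 < D^2 := by
    rcases hj.lt_or_eq with h | h
    · exact Or.inl h
    · rcases hk.lt_or_eq with h' | h'
      · exact Or.inr h'
      · exact absurd ⟨hjeq h, hkeq h'⟩ hndvd
  have c1 : ((N1:ℝ))^2 ≤ (D:ℝ)^2 := by exact_mod_cast hj
  have c2 : ((N2:ℝ))^2 ≤ (D:ℝ)^2 := by exact_mod_cast hk
  have hD2 : (0:ℝ) < (D:ℝ)^2 := by
    have : (D:ℝ) ≠ 0 := Int.cast_ne_zero.mpr hD0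
    positivity
  have hbig : (D:ℝ)^2 * (binQF A B C u1 u2 + binQF A B C v1 v2)
      ≤ (D:ℝ)^2 * binQF A B C z1 z2 := by
    rw [← hm]; exact mul_le_mul_of_nonneg_left hmle hD2.le
  rcases hstrict with h | h
  · have hs : ((N1:ℝ))^2 < (D:ℝ)^2 := by exact_mod_cast h
    nlinarith [mul_lt_mul_of_pos_right hs ha, mul_le_mul_of_nonneg_right c2 hb.le]
  · have hs : ((N2:ℝ))^2 < (D:ℝ)^2 := by exact_mod_cast h
    nlinarith [mul_le_mul_of_nonneg_right c1 ha.le, mul_lt_mul_of_pos_right hs hb]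
lemma posdefZ (A B C : ℝ) (hA : 0 < A) (hposdef : B ^ 2 < 4 * A * C)
    (x y : ℤ) (hxy : ¬(x = 0 ∧ y = 0)) : 0 < binQF A B C x y := by
  apply posdefR A B C hA hposdef
  rintro ⟨h1, h2⟩
  exact hxy ⟨by exact_mod_cast h1, by exact_mod_cast h2⟩

/-- A positive definite real binary quadratic form is multiminimizing (it attains
its minimum on some nontrivial coset of `2ℤ²` in `ℤ²` more than twice, counting
`±(x,y)` as one) if and only if it is `SL(2,ℤ)`-equivalent to a diagonal form
`A' x² + C' y²`. -/
theorem stmt_6 (A B C : ℝ) (hA : 0 < A) (hposdef : B ^ 2 < 4 * A * C) :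
    (∃ e : ℤ × ℤ, ¬(Even e.1 ∧ Even e.2) ∧
      ∃ p q : ℤ × ℤ,
        Even (p.1 - e.1) ∧ Even (p.2 - e.2) ∧ Even (q.1 - e.1) ∧ Even (q.2 - e.2) ∧
        (∀ x y : ℤ, Even (x - e.1) → Even (y - e.2) →
          binQF A B C p.1 p.2 ≤ binQF A B C x y) ∧
        binQF A B C q.1 q.2 = binQF A B C p.1 p.2 ∧
        q ≠ p ∧ q ≠ (-p.1, -p.2)) ↔
    (∃ (M : Matrix.SpecialLinearGroup (Fin 2) ℤ) (A' C' : ℝ), ∀ x y : ℤ,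
      binQF A B C (M.1 0 0 * x + M.1 0 1 * y) (M.1 1 0 * x + M.1 1 1 * y) =
        A' * (x : ℝ) ^ 2 + C' * (y : ℝ) ^ 2) := by
  constructor
  · rintro ⟨e, hne0, p, q, hpe1, hpe2, hqe1, hqe2, hmin, heq, hqp, hqnp⟩
    -- define u = (p+q)/2, v = (p-q)/2
    have hpar1 : (p.1 - e.1) % 2 = 0 := Int.even_iff.mp hpe1
    have hpar2 : (p.2 - e.2) % 2 = 0 := Int.even_iff.mp hpe2
    have hpar3 : (q.1 - e.1) % 2 = 0 := Int.even_iff.mp hqe1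
    have hpar4 : (q.2 - e.2) % 2 = 0 := Int.even_iff.mp hqe2
    set u1 : ℤ := (p.1 + q.1) / 2 with hu1_def
    set u2 : ℤ := (p.2 + q.2) / 2 with hu2_def
    set v1 : ℤ := (p.1 - q.1) / 2 with hv1_def
    set v2 : ℤ := (p.2 - q.2) / 2 with hv2_def
    have hp1 : p.1 = u1 + v1 := by omega
    have hp2 : p.2 = u2 + v2 := by omega
    have hq1 : q.1 = u1 - v1 := by omega
    have hq2 : q.2 = u2 - v2 := by omega
    have hp1R : ((p.1 : ℤ) : ℝ) = (u1:ℝ) + (v1:ℝ) := by exact_mod_cast congrArg (Int.cast : ℤ → ℝ) hp1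
    have hp2R : ((p.2 : ℤ) : ℝ) = (u2:ℝ) + (v2:ℝ) := by exact_mod_cast congrArg (Int.cast : ℤ → ℝ) hp2
    have hq1R : ((q.1 : ℤ) : ℝ) = (u1:ℝ) - (v1:ℝ) := by exact_mod_cast congrArg (Int.cast : ℤ → ℝ) hq1
    have hq2R : ((q.2 : ℤ) : ℝ) = (u2:ℝ) - (v2:ℝ) := by exact_mod_cast congrArg (Int.cast : ℤ → ℝ) hq2
    set G : ℝ := 2*A*(u1:ℝ)*v1 + B*((u1:ℝ)*v2 + (u2:ℝ)*v1) + 2*C*(u2:ℝ)*v2 with hG_def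
    have hP : binQF A B C p.1 p.2 = binQF A B C u1 u2 + binQF A B C v1 v2 + G := by
      simp only [binQF]; rw [hp1R, hp2R, hG_def]; ring
    have hQ : binQF A B C q.1 q.2 = binQF A B C u1 u2 + binQF A B C v1 v2 - G := by
      simp only [binQF]; rw [hq1R, hq2R, hG_def]; ring
    have hG : G = 0 := by rw [hP, hQ] at heq; linarith
    have hm : binQF A B C p.1 p.2 = binQF A B C u1 u2 + binQF A B C v1 v2 := by
      rw [hP, hG]; ring
    -- u ≠ 0, v ≠ 0
    have hu0 : ¬(u1 = 0 ∧ u2 = 0) := by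
      rintro ⟨h1, h2⟩
      apply hqnp
      exact Prod.ext (by omega) (by omega)
    have hv0 : ¬(v1 = 0 ∧ v2 = 0) := by
      rintro ⟨h1, h2⟩
      apply hqp
      exact Prod.ext (by omega) (by omega)
    have ha : 0 < binQF A B C u1 u2 := posdefZ A B C hA hposdef u1 u2 hu0
    have hb : 0 < binQF A B C v1 v2 := posdefZ A B C hA hposdef v1 v2 hv0
    set D : ℤ := u1*v2 - u2*v1 with hD_def
    -- D ≠ 0
    have hD0 : D ≠ 0 := by
      intro hD
      rw [hD_def] at hD
      have hDZ : u1*v2 = u2*v1 := by linarith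
      have hDc : (u1:ℝ)*v2 = (u2:ℝ)*v1 := by
        have : ((u1*v2 : ℤ) : ℝ) = ((u2*v1 : ℤ) : ℝ) :=
          congrArg (Int.cast : ℤ → ℝ) hDZ
        push_cast at this; exact this
      have h1 : (v1:ℝ) * G = 2 * (u1:ℝ) * binQF A B C v1 v2 := by
        simp only [binQF]; rw [hG_def]
        linear_combination (-(B*(v1:ℝ) + 2*C*(v2:ℝ))) * hDc
      have h2 : (v2:ℝ) * G = 2 * (u2:ℝ) * binQF A B C v1 v2 := by
        simp only [binQF]; rw [hG_def]
        linear_combination (2*A*(v1:ℝ) + B*(v2:ℝ)) * hDc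
      rw [hG, mul_zero] at h1 h2
      have hu1z : (u1:ℝ) = 0 := by
        rcases mul_eq_zero.mp h1.symm with h | h
        · rcases mul_eq_zero.mp h with h' | h'
          · norm_num at h'
          · exact h'
        · exact absurd h hb.ne'
      have hu2z : (u2:ℝ) = 0 := by
        rcases mul_eq_zero.mp h2.symm with h | h
        · rcases mul_eq_zero.mp h with h' | h'
          · norm_num at h'
          · exact h'
        · exact absurd h hb.ne'
      exact hu0 ⟨by exact_mod_cast hu1z, by exact_mod_cast hu2z⟩
    by_cases hD1 : D = 1 ∨ D = -1
    · -- construct the matrix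
      rcases hD1 with h | h
      · rw [hD_def] at h
        refine ⟨⟨!![u1, v1; u2, v2], ?_⟩, binQF A B C u1 u2, binQF A B C v1 v2, ?_⟩
        · rw [Matrix.det_fin_two_of]; linear_combination h
        · intro x y
          simp only [Matrix.SpecialLinearGroup.coe_mk, Matrix.cons_val', Matrix.cons_val_zero,
            Matrix.cons_val_one, Matrix.head_cons, Matrix.head_fin_const, Matrix.of_apply,
            Matrix.empty_val', Matrix.cons_val_fin_one]
          simp only [binQF]
          push_cast
          linear_combination ((x:ℝ)*(y:ℝ)) * hG
      · rw [hD_def] at h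
        refine ⟨⟨!![u1, -v1; u2, -v2], ?_⟩, binQF A B C u1 u2, binQF A B C v1 v2, ?_⟩
        · rw [Matrix.det_fin_two_of]; linear_combination -h
        · intro x y
          simp only [Matrix.SpecialLinearGroup.coe_mk, Matrix.cons_val', Matrix.cons_val_zero,
            Matrix.cons_val_one, Matrix.head_cons, Matrix.head_fin_const, Matrix.of_apply,
            Matrix.empty_val', Matrix.cons_val_fin_one]
          simp only [binQF]
          push_cast
          linear_combination (-(x:ℝ)*(y:ℝ)) * hG
    · -- |D| ≥ 2 : contradiction
      exfalso
      push_neg at hD1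
      by_cases hw : D ∣ (1*v2 - 0*v1) ∧ D ∣ (u1*0 - u2*1)
      · by_cases hw2 : D ∣ (0*v2 - 1*v1) ∧ D ∣ (u1*1 - u2*0)
        · -- D divides u1,u2,v1,v2
          obtain ⟨⟨c4, hc4⟩, ⟨c2, hc2⟩⟩ := hw
          obtain ⟨⟨c3, hc3⟩, ⟨c1, hc1⟩⟩ := hw2
          have hu1' : u1 = D * c1 := by linear_combination hc1
          have hu2' : u2 = D * (-c2) := by linear_combination -hc2
          have hv1' : v1 = D * (-c3) := by linear_combination -hc3
          have hv2' : v2 = D * c4 := by linear_combination hc4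
          have hDD : D = D * D * (c1 * c4 - c2 * c3) :=
            calc D = u1*v2 - u2*v1 := hD_def
              _ = (D*c1)*(D*c4) - (D*(-c2))*(D*(-c3)) := by
                  rw [← hu1', ← hu2', ← hv1', ← hv2']
              _ = D * D * (c1*c4 - c2*c3) := by ring
          have h2 : D * (D * (c1*c4 - c2*c3) - 1) = 0 := by linear_combination -hDD
          have hDk : D * (c1*c4 - c2*c3) = 1 := by
            rcases mul_eq_zero.mp h2 with h | h
            · exact absurd h hD0
            · linarith
          rcases Int.isUnit_iff.mp (IsUnit.of_mul_eq_one _ hDk) with h | h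
          · exact hD1.1 h
          · exact hD1.2 h
        · exact aux_contra A B C e p u1 u2 v1 v2 0 1 hp1 hp2 hpe1 hpe2 hmin hG hm ha hb hD0 hw2
      · exact aux_contra A B C e p u1 u2 v1 v2 1 0 hp1 hp2 hpe1 hpe2 hmin hG hm ha hb hD0 hw
  · rintro ⟨M, A', C', hM⟩
    set a : ℤ := M.1 0 0 with ha_def
    set b : ℤ := M.1 0 1 with hb_def
    set c : ℤ := M.1 1 0 with hc_def
    set d : ℤ := M.1 1 1 with hd_def
    have hdet : a * d - b * c = 1 := by
      have h := M.2
      rw [Matrix.det_fin_two] at h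
      rw [ha_def, hb_def, hc_def, hd_def]; exact h
    -- values of A', C', A'+C'
    have hA' : A' = binQF A B C a c := by
      have h := hM 1 0
      have e1 : a * 1 + b * 0 = a := by ring
      have e2 : c * 1 + d * 0 = c := by ring
      rw [e1, e2] at h
      push_cast at h
      linarith
    have hC' : C' = binQF A B C b d := by
      have h := hM 0 1
      have e1 : a * 0 + b * 1 = b := by ring
      have e2 : c * 0 + d * 1 = d := by ring
      rw [e1, e2] at h
      push_cast at h
      linarith
    have hFp : binQF A B C (a + b) (c + d) = A' + C' := by
      have h := hM 1 1
      have e1 : a * 1 + b * 1 = a + b := by ring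
      have e2 : c * 1 + d * 1 = c + d := by ring
      rw [e1, e2] at h
      push_cast at h
      linarith
    have hFq : binQF A B C (a - b) (c - d) = A' + C' := by
      have h := hM 1 (-1)
      have e1 : a * 1 + b * (-1) = a - b := by ring
      have e2 : c * 1 + d * (-1) = c - d := by ring
      rw [e1, e2] at h
      push_cast at h
      linarith
    have hA'pos : 0 < A' := by
      rw [hA']
      apply posdefZ A B C hA hposdef
      rintro ⟨h1, h2⟩
      rw [h1, h2] at hdet
      simp at hdet
    have hC'pos : 0 < C' := by
      rw [hC']
      apply posdefZ A B C hA hposdef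
      rintro ⟨h1, h2⟩
      rw [h1, h2] at hdet
      simp at hdet
    refine ⟨(a + b, c + d), ?_, (a + b, c + d), (a - b, c - d),
      by simp, by simp, ⟨-b, by ring⟩, ⟨-d, by ring⟩, ?_, ?_, ?_, ?_⟩
    · -- nontrivial coset
      rintro ⟨⟨r, hr⟩, ⟨s, hs⟩⟩
      have h1 : (1:ℤ) = 2*(r*d + s*a - 2*r*s) := by
        linear_combination -hdet + (d - 2*s)*hr + (-b)*hs
      omega
    · -- minimality
      intro x y hx hy
      obtain ⟨α, hα⟩ := hx
      obtain ⟨β, hβ⟩ := hy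
      set U : ℤ := d*x - b*y with hU_def
      set V : ℤ := a*y - c*x with hV_def
      have hxU : x = a*U + b*V := by rw [hU_def, hV_def]; linear_combination (-x)*hdet
      have hyU : y = c*U + d*V := by rw [hU_def, hV_def]; linear_combination (-y)*hdet
      have hval : binQF A B C x y = A' * (U:ℝ)^2 + C' * (V:ℝ)^2 := by
        have h := hM U V
        rw [← hxU, ← hyU] at h
        exact h
      have hUodd : U = 1 + 2*(d*α - b*β) := by
        rw [hU_def]; linear_combination hdet + d*hα + (-b)*hβ
      have hVodd : V = 1 + 2*(a*β - c*α) := by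
        rw [hV_def]; linear_combination hdet + a*hβ + (-c)*hα
      have hU2 : 1 ≤ U^2 := by
        rcases (by omega : 1 ≤ U ∨ U ≤ -1) with h | h
        · nlinarith
        · nlinarith
      have hV2 : 1 ≤ V^2 := by
        rcases (by omega : 1 ≤ V ∨ V ≤ -1) with h | h
        · nlinarith
        · nlinarith
      have hU2R : (1:ℝ) ≤ (U:ℝ)^2 := by exact_mod_cast hU2
      have hV2R : (1:ℝ) ≤ (V:ℝ)^2 := by exact_mod_cast hV2
      have : binQF A B C (a + b) (c + d) = A' + C' := hFp
      rw [this, hval]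
      nlinarith [mul_le_mul_of_nonneg_left hU2R hA'pos.le,
        mul_le_mul_of_nonneg_left hV2R hC'pos.le]
    · -- equal values
      rw [hFp, hFq]
    · -- q ≠ p
      intro h
      have h1 : a - b = a + b := congrArg Prod.fst h
      have h2 : c - d = c + d := congrArg Prod.snd h
      have hb0 : b = 0 := by omega
      have hd0 : d = 0 := by omega
      rw [hb0, hd0] at hdet
      simp at hdet
    · -- q ≠ -p
      intro h
      have h1 : a - b = -(a + b) := congrArg Prod.fst h
      have h2 : c - d = -(c + d) := congrArg Prod.snd h
      have ha0 : a = 0 := by omega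
      have hc0 : c = 0 := by omega
      rw [ha0, hc0] at hdet
      simp at hdet
end

section
/- Define the slow plus greater-than-one continued fraction map on real numbers x > 1 by T(x) = x − 1 if x > 2, and T(x) = 1/(x−1) if 1 < x < 2. Then a real quadratic irrational λ > 1 is purely periodic under T (i.e. T^n(λ) = λ for some n ≥ 1) if and only if λ is standard, meaning λ > 1 > 0 > λ', where λ' is the Galois conjugate of λ. -/
/-- The slow plus greater-than-one continued fraction map:
`T(x) = x − 1` if `x > 2`, and `T(x) = 1/(x−1)` otherwise (i.e. for `1 < x < 2`). -/
noncomputable def slowCF (x : ℝ) : ℝ := if 2 < x then x - 1 else 1 / (x - 1)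

namespace SlowAux

/-- Step on coefficient triples, matching the branch of `slowCF` at `x`. -/
noncomputable def G (t : ℤ × ℤ × ℤ) (x : ℝ) : ℤ × ℤ × ℤ :=
  if 2 < x then (t.1, 2*t.1 + t.2.1, t.1 + t.2.1 + t.2.2)
  else (-(t.1 + t.2.1 + t.2.2), -(2*t.1 + t.2.1), -t.1)

/-- Weak invariant: `x` is an irrational root `> 1` of the integer quadratic `t`. -/
def Wt (t : ℤ × ℤ × ℤ) (x : ℝ) : Prop :=
  t.1 ≠ 0 ∧ ((t.1 : ℝ) * x ^ 2 + (t.2.1 : ℝ) * x + (t.2.2 : ℝ) = 0) ∧ 1 < x ∧ Irrational x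

/-- Strong invariant ("standard"): additionally `a > 0` and `c < 0`. -/
def Gd (t : ℤ × ℤ × ℤ) (x : ℝ) : Prop := Wt t x ∧ 0 < t.1 ∧ t.2.2 < 0

/-- The Galois conjugate of the root `x` of the quadratic `t` (via Vieta). -/
noncomputable def mu (t : ℤ × ℤ × ℤ) (x : ℝ) : ℝ := (t.2.2 : ℝ) / ((t.1 : ℝ) * x)

/-- The orbit of triples along the `slowCF`-orbit of `lam`. -/
noncomputable def ts (lam : ℝ) (t : ℤ × ℤ × ℤ) : ℕ → ℤ × ℤ × ℤ
  | 0 => t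
  | k+1 => G (ts lam t k) (slowCF^[k] lam)

lemma not_lin {x : ℝ} (hirr : Irrational x) {p q : ℤ} (hp : p ≠ 0)
    (h : (p : ℝ) * x + (q : ℝ) = 0) : False := by
  apply hirr
  refine ⟨-q / p, ?_⟩
  have hp' : (p : ℝ) ≠ 0 := Int.cast_ne_zero.2 hp
  push_cast
  field_simp
  linarith

variable {t t' : ℤ × ℤ × ℤ} {x : ℝ}

lemma Wt.x_pos (h : Wt t x) : 0 < x := lt_trans one_pos h.2.2.1
lemma Wt.x_ne_zero (h : Wt t x) : x ≠ 0 := ne_of_gt h.x_pos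
lemma Wt.x_ne_one (h : Wt t x) : x ≠ 1 := ne_of_gt h.2.2.1
lemma Wt.x_ne_two (h : Wt t x) : x ≠ 2 := by
  have := h.2.2.2.ne_int 2; simpa using this

lemma Wt.c_ne (h : Wt t x) : t.2.2 ≠ 0 := by
  obtain ⟨ha, hroot, hx1, hirr⟩ := h
  intro hc
  rw [hc] at hroot
  have h2 : x * ((t.1 : ℝ) * x + (t.2.1 : ℝ)) = 0 := by push_cast at hroot ⊢; linear_combination hroot
  rcases mul_eq_zero.1 h2 with h3 | h3
  · rw [h3] at hx1; norm_num at hx1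
  · exact not_lin hirr ha h3

lemma Wt.sum_ne (h : Wt t x) : t.1 + t.2.1 + t.2.2 ≠ 0 := by
  obtain ⟨ha, hroot, hx1, hirr⟩ := h
  intro hs
  have hz : (t.1 : ℝ) + (t.2.1 : ℝ) + (t.2.2 : ℝ) = 0 := by exact_mod_cast hs
  have h2 : (x - 1) * ((t.1 : ℝ) * x + (-t.2.2 : ℤ)) = 0 := by
    push_cast
    linear_combination hroot - x * hz
  rcases mul_eq_zero.1 h2 with h3 | h3
  · have : x ≠ 1 := ne_of_gt hx1
    exact this (by linarith [sub_eq_zero.1 h3])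
  · exact not_lin hirr ha h3

lemma Wt.mu_eq (h : Wt t x) : mu t x = -(t.2.1 : ℝ) / (t.1 : ℝ) - x := by
  obtain ⟨ha, hroot, hx1, hirr⟩ := h
  have ha' : (t.1 : ℝ) ≠ 0 := Int.cast_ne_zero.2 ha
  have hx0 : x ≠ 0 := by positivity
  have hax : (t.1 : ℝ) * x ≠ 0 := mul_ne_zero ha' hx0
  have hexp : (-(t.2.1 : ℝ) / (t.1 : ℝ) - x) * ((t.1 : ℝ) * x) = -(t.2.1 : ℝ) * x - (t.1 : ℝ) * x ^ 2 := by
    field_simp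
  rw [mu, div_eq_iff hax, hexp]
  linear_combination hroot

lemma Wt.mu_irr (h : Wt t x) : Irrational (mu t x) := by
  have hcast : ((-t.2.1 / t.1 : ℚ) : ℝ) = -(t.2.1 : ℝ) / (t.1 : ℝ) := by push_cast; ring
  rw [h.mu_eq, ← hcast]
  exact Irrational.ratCast_sub _ h.2.2.2

lemma Wt.mu_ne_self (h : Wt t x) : mu t x ≠ x := by
  obtain ⟨ha, hroot, hx1, hirr⟩ := h
  intro he
  rw [Wt.mu_eq ⟨ha, hroot, hx1, hirr⟩] at he
  have ha' : (t.1 : ℝ) ≠ 0 := Int.cast_ne_zero.2 ha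
  have h2 : ((2*t.1 : ℤ) : ℝ) * x + (t.2.1 : ℝ) = 0 := by
    push_cast
    field_simp at he
    linarith
  exact (not_lin hirr (by omega : (2*t.1 : ℤ) ≠ 0) h2)

end SlowAux

namespace SlowAux

variable {t t' : ℤ × ℤ × ℤ} {x : ℝ}

lemma Wt.step (h : Wt t x) : Wt (G t x) (slowCF x) := by
  have hx2 := h.x_ne_two
  obtain ⟨ha, hroot, hx1, hirr⟩ := h
  rw [G, slowCF]
  split_ifs with h2
  · refine ⟨ha, ?_, by linarith, by simpa using Irrational.sub_intCast hirr 1⟩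
    push_cast
    linear_combination hroot
  · have hxlt : x < 2 := lt_of_le_of_ne (not_lt.1 h2) hx2
    have hx1' : x - 1 ≠ 0 := sub_ne_zero.2 (ne_of_gt hx1)
    have h0 : 0 < x - 1 := by linarith
    refine ⟨?_, ?_, ?_, ?_⟩
    · have hs := Wt.sum_ne ⟨ha, hroot, hx1, hirr⟩
      simp only [ne_eq, neg_eq_zero]
      omega
    · push_cast
      field_simp
      linear_combination -hroot
    · rw [lt_div_iff₀ h0]; linarith
    · rw [one_div]
      simpa using (Irrational.sub_intCast hirr 1).inv

lemma Gd.sum_neg (h : Gd t x) : t.1 + t.2.1 + t.2.2 < 0 := by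
  obtain ⟨⟨ha, hroot, hx1, hirr⟩, hA, hC⟩ := h
  have hAr : (0 : ℝ) < (t.1 : ℝ) := by exact_mod_cast hA
  have hCr : (t.2.2 : ℝ) < 0 := by exact_mod_cast hC
  have hxpos : (0 : ℝ) < x := by linarith
  have hid : x * ((t.1 : ℝ) + t.2.1 + t.2.2) = (x - 1) * ((t.2.2 : ℝ) - t.1 * x) := by
    linear_combination hroot
  have hax : (0 : ℝ) < (t.1 : ℝ) * x := mul_pos hAr hxpos
  have hrhs : (x - 1) * ((t.2.2 : ℝ) - (t.1 : ℝ) * x) < 0 :=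
    mul_neg_of_pos_of_neg (by linarith) (by linarith)
  have hS : ((t.1 : ℝ) + t.2.1 + t.2.2) < 0 := by
    by_contra hns
    push_neg at hns
    have h1 : 0 ≤ x * ((t.1 : ℝ) + t.2.1 + t.2.2) := mul_nonneg hxpos.le hns
    linarith
  exact_mod_cast hS

lemma Gd.step (h : Gd t x) : Gd (G t x) (slowCF x) := by
  have hs := h.sum_neg
  have h1 := h.2.1
  refine ⟨h.1.step, ?_, ?_⟩ <;> rw [G] <;> split_ifs <;> dsimp only <;> omega

lemma Wt.keyid (h : Wt t x) :
    ((t.1 : ℝ) + t.2.1 + t.2.2) / ((t.1 : ℝ) * (x - 1)) = mu t x - 1 := by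
  obtain ⟨ha, hroot, hx1, hirr⟩ := h
  have ha' : (t.1 : ℝ) ≠ 0 := Int.cast_ne_zero.2 ha
  have hx0 : x ≠ 0 := by positivity
  have hx1' : x - 1 ≠ 0 := sub_ne_zero.2 (ne_of_gt hx1)
  rw [mu]
  field_simp
  linear_combination hroot

lemma Wt.mu_step (h : Wt t x) :
    mu (G t x) (slowCF x) = if 2 < x then mu t x - 1 else (mu t x - 1)⁻¹ := by
  have hkey := h.keyid
  have hsum := h.sum_ne
  obtain ⟨ha, hroot, hx1, hirr⟩ := h
  have ha' : (t.1 : ℝ) ≠ 0 := Int.cast_ne_zero.2 ha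
  have hx0 : x ≠ 0 := by positivity
  have hx1' : x - 1 ≠ 0 := sub_ne_zero.2 (ne_of_gt hx1)
  have hsum' : ((t.1 : ℝ) + t.2.1 + t.2.2) ≠ 0 := by
    intro h0
    exact hsum (by exact_mod_cast h0)
  rw [G, slowCF]
  split_ifs with h2
  · rw [mu]
    dsimp only
    rw [← hkey]
    push_cast
    ring
  · apply inv_injective
    rw [inv_inv, ← hkey]
    simp only [mu, inv_div]
    push_cast
    field_simp

lemma mu_unique (h1 : Wt t x) (h2 : Wt t' x) : mu t x = mu t' x := by
  obtain ⟨ha, hroot, hx1, hirr⟩ := h1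
  obtain ⟨ha2, hroot2, _, _⟩ := h2
  have hlin : ((t'.1 * t.2.1 - t.1 * t'.2.1 : ℤ) : ℝ) * x
      + ((t'.1 * t.2.2 - t.1 * t'.2.2 : ℤ) : ℝ) = 0 := by
    push_cast
    linear_combination (t'.1 : ℝ) * hroot - (t.1 : ℝ) * hroot2
  by_cases hp : (t'.1 * t.2.1 - t.1 * t'.2.1 : ℤ) = 0
  · rw [hp] at hlin
    push_cast at hlin
    have hq : ((t'.1 * t.2.2 - t.1 * t'.2.2 : ℤ) : ℝ) = 0 := by push_cast; linarith
    have hq' : (t'.1 : ℝ) * t.2.2 - t.1 * t'.2.2 = 0 := by push_cast at hq; linarith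
    have ha' : (t.1 : ℝ) ≠ 0 := Int.cast_ne_zero.2 ha
    have ha2' : (t'.1 : ℝ) ≠ 0 := Int.cast_ne_zero.2 ha2
    have hx0 : x ≠ 0 := by positivity
    rw [mu, mu, div_eq_div_iff (by exact mul_ne_zero ha' hx0) (by exact mul_ne_zero ha2' hx0)]
    linear_combination x * hq'
  · exact absurd hlin (by intro hh; exact not_lin hirr hp hh)

lemma Gd.mu_neg (h : Gd t x) : mu t x < 0 := by
  have hxpos : (0 : ℝ) < x := h.1.x_pos
  have hAr : (0 : ℝ) < (t.1 : ℝ) := by exact_mod_cast h.2.1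
  have hCr : (t.2.2 : ℝ) < 0 := by exact_mod_cast h.2.2
  exact div_neg_of_neg_of_pos hCr (by positivity)

lemma Gd.root_unique {y : ℝ} (h1 : Gd t x) (h2 : Gd t y) : x = y := by
  by_contra hne
  obtain ⟨⟨ha, hroot, hx1, hirr⟩, hA, hC⟩ := h1
  obtain ⟨⟨_, hroot2, hy1, _⟩, _, _⟩ := h2
  have hsub : (x - y) * ((t.1 : ℝ) * (x + y) + t.2.1) = 0 := by
    linear_combination hroot - hroot2
  have h3 : (t.1 : ℝ) * (x + y) + t.2.1 = 0 := by
    rcases mul_eq_zero.1 hsub with h4 | h4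
    · exact absurd (sub_eq_zero.1 h4) hne
    · exact h4
  have hc : (t.2.2 : ℝ) = t.1 * x * y := by
    linear_combination hroot - x * h3
  have hAr : (0 : ℝ) < (t.1 : ℝ) := by exact_mod_cast hA
  have hCr : (t.2.2 : ℝ) < 0 := by exact_mod_cast hC
  have hx0 : (0 : ℝ) < x := by linarith
  have hy0 : (0 : ℝ) < y := by linarith
  have h5 : (0 : ℝ) < (t.1 : ℝ) * x * y := mul_pos (mul_pos hAr hx0) hy0
  linarith

lemma disc_G : (G t x).2.1 ^ 2 - 4 * (G t x).1 * (G t x).2.2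
    = t.2.1 ^ 2 - 4 * t.1 * t.2.2 := by
  rw [G]; split_ifs <;> dsimp only <;> ring

lemma step_inj {z w : ℝ} (h1 : Gd t z) (h2 : Gd t' w) (he : slowCF z = slowCF w) : z = w := by
  have hW1 : Wt (G t z) (slowCF z) := h1.1.step
  have hW2 : Wt (G t' w) (slowCF w) := h2.1.step
  have hW2' : Wt (G t' w) (slowCF z) := by rw [he]; exact hW2
  have hequ : mu (G t z) (slowCF z) = mu (G t' w) (slowCF w) := by
    have := mu_unique hW1 hW2'
    rw [this, he]
  rw [h1.1.mu_step, h2.1.mu_step] at hequ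
  have hν : mu t z < 0 := h1.mu_neg
  have hω : mu t' w < 0 := h2.mu_neg
  have hz2 := h1.1.x_ne_two
  have hw2 := h2.1.x_ne_two
  rw [slowCF, slowCF] at he
  by_cases hz : 2 < z <;> by_cases hw : 2 < w
  · rw [if_pos hz, if_pos hw] at he; linarith
  · rw [if_pos hz, if_neg hw] at hequ
    have hωne : mu t' w - 1 ≠ 0 := by intro h0; nlinarith
    have hp : (mu t z - 1) * (mu t' w - 1) = 1 := by
      rw [hequ]; exact inv_mul_cancel₀ hωne
    have hgt : (1 : ℝ) * 1 < (1 - mu t z) * (1 - mu t' w) :=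
      mul_lt_mul'' (by linarith) (by linarith) (by norm_num) (by norm_num)
    nlinarith
  · rw [if_neg hz, if_pos hw] at hequ
    have hνne : mu t z - 1 ≠ 0 := by intro h0; nlinarith
    have hp : (mu t' w - 1) * (mu t z - 1) = 1 := by
      rw [← hequ]; exact inv_mul_cancel₀ hνne
    have hgt : (1 : ℝ) * 1 < (1 - mu t z) * (1 - mu t' w) :=
      mul_lt_mul'' (by linarith) (by linarith) (by norm_num) (by norm_num)
    nlinarith
  · rw [if_neg hz, if_neg hw, one_div, one_div] at he
    have h6 := inv_injective he
    linarith [h6]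

end SlowAux

namespace SlowAux

variable {t t' : ℤ × ℤ × ℤ} {x lam : ℝ}

/-- The orbit of `lam` itself. -/
noncomputable def Lf (lam : ℝ) (k : ℕ) : ℝ := slowCF^[k] lam

/-- The conjugate orbit. -/
noncomputable def Mf (lam : ℝ) (t : ℤ × ℤ × ℤ) (k : ℕ) : ℝ := mu (ts lam t k) (Lf lam k)

lemma Lf_zero : Lf lam 0 = lam := rfl

lemma Lf_succ (k : ℕ) : Lf lam (k+1) = slowCF (Lf lam k) :=
  Function.iterate_succ_apply' slowCF k lam

lemma Wt.ts_all (h : Wt t lam) (k : ℕ) : Wt (ts lam t k) (Lf lam k) := by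
  induction k with
  | zero => exact h
  | succ k ih => rw [ts, Lf_succ]; exact ih.step

lemma Gd.ts_all (h : Gd t lam) (k : ℕ) : Gd (ts lam t k) (Lf lam k) := by
  induction k with
  | zero => exact h
  | succ k ih => rw [ts, Lf_succ]; exact ih.step

lemma disc_ts (k : ℕ) : (ts lam t k).2.1 ^ 2 - 4 * (ts lam t k).1 * (ts lam t k).2.2
    = t.2.1 ^ 2 - 4 * t.1 * t.2.2 := by
  induction k with
  | zero => rfl
  | succ k ih => rw [ts, disc_G]; exact ih

lemma Mf_step (hW : Wt t lam) (k : ℕ) :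
    Mf lam t (k+1) = if 2 < Lf lam k then Mf lam t k - 1 else (Mf lam t k - 1)⁻¹ := by
  have h := (hW.ts_all k).mu_step
  rw [Mf, ts, Lf_succ]
  exact h

/-- The "(→)" direction core: a periodic point has negative conjugate. -/
theorem mu_neg_of_periodic (hW : Wt t lam) {n : ℕ} (hn : 0 < n)
    (hper : slowCF^[n] lam = lam) : mu t lam < 0 := by
  have hWk : ∀ k, Wt (ts lam t k) (Lf lam k) := hW.ts_all
  have hLper : ∀ k, Lf lam (k + n) = Lf lam k := by
    intro k
    rw [Lf, Function.iterate_add_apply, hper]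
    rfl
  have hMper : ∀ k, Mf lam t (k + n) = Mf lam t k := by
    intro k
    have h1 := hWk (k + n)
    rw [hLper k] at h1
    have h2 := mu_unique h1 (hWk k)
    rw [Mf, hLper k]
    exact h2
  have hMstep := Mf_step hW
  by_contra hc0
  push_neg at hc0
  have hM0 : Mf lam t 0 = mu t lam := rfl
  have hMirr : ∀ k, Irrational (Mf lam t k) := fun k => (hWk k).mu_irr
  have hLk1 : ∀ k, 1 < Lf lam k := fun k => (hWk k).2.2.1
  -- Step 1 : all conjugates are positive
  have hneg_step : ∀ k, Mf lam t k < 0 → Mf lam t (k+1) < 0 := by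
    intro k hk
    rw [hMstep k]
    split_ifs
    · linarith
    · exact inv_lt_zero.2 (by linarith)
  have hneg_prop : ∀ k m, Mf lam t k < 0 → Mf lam t (k + m) < 0 := by
    intro k m
    induction m with
    | zero => intro h; exact h
    | succ m ih =>
      intro h
      have h9 := hneg_step (k + m) (ih h)
      rwa [Nat.add_assoc] at h9
  have hMn : ∀ j : ℕ, Mf lam t (j * n) = Mf lam t 0 := by
    intro j
    induction j with
    | zero => rw [Nat.zero_mul]
    | succ j ih => rw [Nat.succ_mul, hMper (j * n), ih]
  have hpos : ∀ k, 0 < Mf lam t k := by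
    intro k
    have hnn : ¬ Mf lam t k < 0 := by
      intro hk
      have h1 : Mf lam t (k + (k * n - k)) < 0 := hneg_prop _ _ hk
      have h2 : k + (k * n - k) = k * n := by
        have := Nat.le_mul_of_pos_right k hn
        omega
      rw [h2, hMn k, hM0] at h1
      linarith
    have hne : Mf lam t k ≠ 0 := by
      have := (hMirr k).ne_int 0
      simpa using this
    rcases lt_trichotomy (Mf lam t k) 0 with h | h | h
    · exact absurd h hnn
    · exact absurd h hne
    · exact h
  -- Step 2 : all conjugates are > 1
  have hgt1 : ∀ k, 1 < Mf lam t k := by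
    intro k
    have hne1 : Mf lam t k ≠ 1 := (hMirr k).ne_one
    by_contra hle
    push_neg at hle
    have hlt : Mf lam t k < 1 := lt_of_le_of_ne hle hne1
    have hk1 := hpos (k+1)
    rw [hMstep k] at hk1
    split_ifs at hk1
    · linarith
    · have h3 : (Mf lam t k - 1)⁻¹ < 0 := inv_lt_zero.2 (by linarith)
      linarith
  -- Step 3 : distances
  have hdpos : ∀ k, 0 < |Lf lam k - Mf lam t k| := by
    intro k
    rw [abs_pos, sub_ne_zero]
    exact fun h => (hWk k).mu_ne_self h.symm
  have hdeq : ∀ k, 2 < Lf lam k → |Lf lam (k+1) - Mf lam t (k+1)| = |Lf lam k - Mf lam t k| := by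
    intro k h2
    have hstepL : Lf lam (k+1) = Lf lam k - 1 := by rw [Lf_succ, slowCF, if_pos h2]
    have hstepM : Mf lam t (k+1) = Mf lam t k - 1 := by rw [hMstep k, if_pos h2]
    rw [hstepL, hstepM]
    congr 1
    ring
  have hdlt : ∀ k, ¬ 2 < Lf lam k →
      |Lf lam k - Mf lam t k| < |Lf lam (k+1) - Mf lam t (k+1)| := by
    intro k h2
    have hx2 := (hWk k).x_ne_two
    have hLlt : Lf lam k < 2 := lt_of_le_of_ne (not_lt.1 h2) hx2
    have hL1 := hLk1 k
    have hM1 := hgt1 k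
    have hstepL : Lf lam (k+1) = (Lf lam k - 1)⁻¹ := by
      rw [Lf_succ, slowCF, if_neg h2, one_div]
    have hstepM : Mf lam t (k+1) = (Mf lam t k - 1)⁻¹ := by rw [hMstep k, if_neg h2]
    have hM2 : Mf lam t k < 2 := by
      have h3 := hgt1 (k+1)
      rw [hstepM] at h3
      have h4 : 0 < Mf lam t k - 1 := by linarith
      have h5 : (Mf lam t k - 1) * (Mf lam t k - 1)⁻¹ = 1 := mul_inv_cancel₀ (ne_of_gt h4)
      nlinarith [mul_lt_mul_of_pos_left h3 h4]
    have hP1 : 0 < Lf lam k - 1 := by linarith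
    have hP2 : 0 < Mf lam t k - 1 := by linarith
    have hPlt : (Lf lam k - 1) * (Mf lam t k - 1) < 1 := by nlinarith
    have hcomp : Lf lam (k+1) - Mf lam t (k+1)
        = (Mf lam t k - Lf lam k) / ((Lf lam k - 1) * (Mf lam t k - 1)) := by
      rw [hstepL, hstepM]
      field_simp
      ring
    have hdk1 : |Lf lam (k+1) - Mf lam t (k+1)|
        = |Lf lam k - Mf lam t k| / ((Lf lam k - 1) * (Mf lam t k - 1)) := by
      rw [hcomp, abs_div, abs_of_pos (mul_pos hP1 hP2), abs_sub_comm]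
    rw [hdk1, lt_div_iff₀ (mul_pos hP1 hP2)]
    nlinarith [hdpos k]
  have hdmono : ∀ i j : ℕ, i ≤ j → |Lf lam i - Mf lam t i| ≤ |Lf lam j - Mf lam t j| := by
    intro i j hij
    induction j with
    | zero => rw [Nat.le_zero.1 hij]
    | succ j ih =>
      rcases Nat.eq_or_lt_of_le hij with rfl | hlt
      · exact le_refl _
      · have h1 := ih (by omega)
        by_cases h2 : 2 < Lf lam j
        · rw [hdeq j h2]; exact h1
        · exact le_trans h1 (le_of_lt (hdlt j h2))
  -- Step 4 : an inversion step occurs below n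
  have hinvstep : ∃ k, k < n ∧ ¬ 2 < Lf lam k := by
    by_contra hall
    push_neg at hall
    have hLm : ∀ m, m ≤ n → Lf lam m = lam - m := by
      intro m hm
      induction m with
      | zero => simp [Lf_zero]
      | succ m ih =>
        have h2 := hall m (by omega)
        have h3 : Lf lam (m+1) = Lf lam m - 1 := by rw [Lf_succ, slowCF, if_pos h2]
        rw [h3, ih (by omega)]
        push_cast
        ring
    have h4 := hLm n le_rfl
    have hLn : Lf lam n = lam := hper
    rw [hLn] at h4
    have h5 : (n : ℝ) = 0 := by linarith
    have h6 : n = 0 := by exact_mod_cast h5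
    omega
  obtain ⟨k, hkn, hk2⟩ := hinvstep
  have h1 := hdmono 0 k (Nat.zero_le k)
  have h2 := hdlt k hk2
  have h3 := hdmono (k+1) n (by omega)
  have h4 : |Lf lam n - Mf lam t n| = |Lf lam 0 - Mf lam t 0| := by
    have hLn : Lf lam n = Lf lam 0 := by simpa using hLper 0
    have hMn' : Mf lam t n = Mf lam t 0 := by simpa using hMper 0
    rw [hLn, hMn']
  rw [h4] at h3
  linarith

lemma good_of_neg_mu (hW : Wt t x) (hA : 0 < t.1) (hmu : mu t x < 0) : Gd t x := by
  refine ⟨hW, hA, ?_⟩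
  have ha' : (t.1 : ℝ) ≠ 0 := Int.cast_ne_zero.2 hW.1
  have hx0 : x ≠ 0 := hW.x_ne_zero
  have hc : (t.2.2 : ℝ) = (t.1 : ℝ) * x * mu t x := by rw [mu]; field_simp
  have hA' : (0 : ℝ) < (t.1 : ℝ) := by exact_mod_cast hA
  have h2 : (t.2.2 : ℝ) < 0 := by
    rw [hc]; exact mul_neg_of_pos_of_neg (mul_pos hA' hW.x_pos) hmu
  exact_mod_cast h2

/-- The "(←)" direction core: a standard quadratic irrational is purely periodic. -/
theorem periodic_of_good (hG : Gd t lam) : ∃ n : ℕ, 0 < n ∧ slowCF^[n] lam = lam := by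
  have hGk : ∀ k, Gd (ts lam t k) (Lf lam k) := hG.ts_all
  set D : ℤ := t.2.1 ^ 2 - 4 * t.1 * t.2.2 with hD
  have hbound : ∀ k, ts lam t k ∈
      Finset.Icc ((1:ℤ), (-D:ℤ), (-D:ℤ)) ((D:ℤ), (D:ℤ), (-1:ℤ)) := by
    intro k
    obtain ⟨⟨ha, _, _, _⟩, hA, hC⟩ := hGk k
    have hDk : (ts lam t k).2.1 ^ 2 - 4 * (ts lam t k).1 * (ts lam t k).2.2 = D :=
      disc_ts k
    set A := (ts lam t k).1 with hA'
    set B := (ts lam t k).2.1 with hB'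
    set C := (ts lam t k).2.2 with hC'
    have hb2 : B ^ 2 ≤ D - 4 := by nlinarith
    have hbsq : B ≤ B ^ 2 := by
      rcases le_or_gt B 0 with h | h
      · nlinarith [sq_nonneg B]
      · nlinarith
    have hbsq' : -B ≤ B ^ 2 := by
      rcases le_or_gt B 0 with h | h
      · nlinarith
      · nlinarith [sq_nonneg B]
    have hA1 : 1 ≤ A := hA
    have hC1 : C ≤ -1 := by omega
    have hAD : A ≤ D := by nlinarith
    have hCD : -D ≤ C := by nlinarith
    have hBD : B ≤ D := by omega
    have hBD' : -D ≤ B := by omega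
    have hts : ts lam t k = (A, B, C) := rfl
    rw [hts]
    simp only [Finset.mem_Icc, Prod.mk_le_mk]
    omega
  have hexists : ∃ i j : ℕ, i < j ∧ ts lam t i = ts lam t j := by
    have ⟨i, j, hne, heq⟩ := Finite.exists_ne_map_eq_of_infinite
      (fun k : ℕ => (⟨ts lam t k, hbound k⟩ :
        {u // u ∈ Finset.Icc ((1:ℤ), (-D:ℤ), (-D:ℤ)) ((D:ℤ), (D:ℤ), (-1:ℤ))}))
    have heq' : ts lam t i = ts lam t j := by simpa [Subtype.ext_iff] using heq
    rcases hne.lt_or_gt with h | h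
    · exact ⟨i, j, h, heq'⟩
    · exact ⟨j, i, h, heq'.symm⟩
  obtain ⟨i, j, hij, heq⟩ := hexists
  have hroots : Lf lam i = Lf lam j := by
    have h1 := hGk i
    have h2 := hGk j
    rw [← heq] at h2
    exact Gd.root_unique h1 h2
  set p := j - i with hp
  have hp0 : 0 < p := by omega
  have hkey : ∀ m, m ≤ i → slowCF^[p] (Lf lam (i - m)) = Lf lam (i - m) := by
    intro m
    induction m with
    | zero =>
      intro _
      have h1 : slowCF^[p] (Lf lam i) = Lf lam (p + i) :=
        (Function.iterate_add_apply slowCF p i lam).symm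
      simp only [Nat.sub_zero]
      rw [h1, show p + i = j from by omega, ← hroots]
    | succ m ih =>
      intro hm
      have ihh := ih (by omega)
      have hu : i - m = (i - (m+1)) + 1 := by omega
      rw [hu] at ihh
      set u := i - (m+1) with hudef
      have e1 : slowCF^[p] (Lf lam u) = Lf lam (p + u) :=
        (Function.iterate_add_apply slowCF p u lam).symm
      have e2 : slowCF (Lf lam (p + u)) = Lf lam (p + u + 1) := (Lf_succ (p + u)).symm
      have e3 : Lf lam (p + u + 1) = slowCF^[p] (Lf lam (u + 1)) := by
        rw [show p + u + 1 = p + (u + 1) from by omega]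
        exact Function.iterate_add_apply slowCF p (u + 1) lam
      have e5 : Lf lam (u + 1) = slowCF (Lf lam u) := Lf_succ u
      have he : slowCF (Lf lam (p + u)) = slowCF (Lf lam u) := by
        rw [e2, e3, ihh, e5]
      have hzw := step_inj (hGk (p + u)) (hGk u) he
      rw [e1, hzw]
  have hfinal := hkey i le_rfl
  simp only [Nat.sub_self] at hfinal
  exact ⟨p, hp0, hfinal⟩

end SlowAux

/-- A real quadratic irrational `λ > 1` (an irrational root of
`a λ² + b λ + c = 0` with integer coefficients, `a ≠ 0`) is purely periodic under
the slow plus greater-than-one continued fraction map if and only if it is standard,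
i.e. `λ > 1 > 0 > λ'`, where `λ' = −b/a − λ` is its Galois conjugate. -/
theorem stmt_9 (lam : ℝ) (hirr : Irrational lam)
    (a b c : ℤ) (ha : a ≠ 0)
    (hroot : (a : ℝ) * lam ^ 2 + (b : ℝ) * lam + (c : ℝ) = 0)
    (hlam : 1 < lam) :
    (∃ n : ℕ, 0 < n ∧ slowCF^[n] lam = lam) ↔
      (1 < lam ∧ -(b : ℝ) / (a : ℝ) - lam < 0) := by
  have hWorig : SlowAux.Wt (a, b, c) lam := ⟨ha, hroot, hlam, hirr⟩
  constructor
  · rintro ⟨n, hn, hper⟩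
    refine ⟨hlam, ?_⟩
    have hmu := SlowAux.mu_neg_of_periodic hWorig hn hper
    rw [hWorig.mu_eq] at hmu
    exact hmu
  · rintro ⟨-, hstd⟩
    obtain ⟨A, B, C, hA, hWABC⟩ : ∃ A B C : ℤ, 0 < A ∧ SlowAux.Wt (A, B, C) lam := by
      rcases lt_or_gt_of_ne ha with hneg | hpos
      · exact ⟨-a, -b, -c, by omega,
          ⟨by omega, by push_cast; linear_combination -hroot, hlam, hirr⟩⟩
      · exact ⟨a, b, c, hpos, hWorig⟩
    have hmuABC : SlowAux.mu (A, B, C) lam < 0 := by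
      rw [SlowAux.mu_unique hWABC hWorig, hWorig.mu_eq]
      exact hstd
    exact SlowAux.periodic_of_good (SlowAux.good_of_neg_mu hWABC hA hmuABC)
end

section
/- Define the fast minus continued fraction map on real quadratic irrationals x > 1 by S(x) = 1/(⌈x⌉ − x). Then x is purely periodic under S if and only if x is reduced, i.e. x > 1 > x' > 0 where x' is the Galois conjugate of x. -/
noncomputable def fastMinusCF (x : ℝ) : ℝ := 1 / ((⌈x⌉ : ℝ) - x)

abbrev QRoot (a b c : ℤ) (x : ℝ) : Prop := (a:ℝ)*x^2 + (b:ℝ)*x + (c:ℝ) = 0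

lemma fmcf_frac {x : ℝ} (hirr : Irrational x) : 0 < (⌈x⌉:ℝ) - x ∧ (⌈x⌉:ℝ) - x < 1 := by
  have h1 := Int.le_ceil x
  have h2 := Int.ceil_lt_add_one x
  have h3 : x ≠ (⌈x⌉:ℝ) := hirr.ne_int ⌈x⌉
  constructor <;> [skip; linarith]
  rcases lt_or_eq_of_le h1 with h | h
  · linarith
  · exact absurd h h3

lemma fmcf_irrational {x : ℝ} (hirr : Irrational x) : Irrational (fastMinusCF x) := by
  rw [fastMinusCF, one_div]
  exact (hirr.intCast_sub ⌈x⌉).inv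

lemma fmcf_gt_one {x : ℝ} (hirr : Irrational x) : 1 < fastMinusCF x := by
  obtain ⟨h1, h2⟩ := fmcf_frac hirr
  rw [fastMinusCF, lt_div_iff₀ h1]
  linarith

lemma ceil_ge_two {x : ℝ} (hx : 1 < x) : (2:ℤ) ≤ ⌈x⌉ := by
  have : (1:ℤ) < ⌈x⌉ := Int.lt_ceil.mpr (by exact_mod_cast hx)
  omega

lemma conj_irrational {x : ℝ} (hirr : Irrational x) (a b : ℤ) :
    Irrational (-(b:ℝ)/a - x) := by
  have : ((- b / a : ℚ) : ℝ) = -(b:ℝ)/a := by push_cast; ring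
  simpa [this] using (hirr.ratCast_sub (q := -b/a))

lemma conj_unique {x : ℝ} (hirr : Irrational x) {a b c a' b' c' : ℤ}
    (ha : a ≠ 0) (ha' : a' ≠ 0) (h : QRoot a b c x) (h' : QRoot a' b' c' x) :
    -(b:ℝ)/a - x = -(b':ℝ)/a' - x := by
  have key : ((a'*b - a*b' : ℤ):ℝ) * x + ((a'*c - a*c' : ℤ):ℝ) = 0 := by
    push_cast
    linear_combination (a':ℝ) * h - (a:ℝ) * h'
  have hz : a'*b - a*b' = 0 := by
    by_contra hne
    have hc : ((a'*b - a*b' : ℤ):ℝ) ≠ 0 := Int.cast_ne_zero.mpr hne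
    have hxval : x = ((a*c' - a'*c : ℤ):ℝ) / ((a'*b - a*b' : ℤ):ℝ) := by
      rw [eq_div_iff hc]
      push_cast at key ⊢
      linarith [key]
    exact hirr ⟨((a*c' - a'*c : ℚ))/((a'*b - a*b' : ℚ)), by push_cast at hxval ⊢; rw [← hxval]⟩
  have hzr : (a':ℝ)*b = a*b' := by exact_mod_cast (by omega : a'*b = a*b')
  have haR : (a:ℝ) ≠ 0 := Int.cast_ne_zero.mpr ha
  have haR' : (a':ℝ) ≠ 0 := Int.cast_ne_zero.mpr ha'
  field_simp
  linear_combination -hzr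

lemma step_lemma {x : ℝ} (hirr : Irrational x) (hx : 1 < x) {a b c : ℤ}
    (ha : a ≠ 0) (h : QRoot a b c x) :
    ∃ a' b' c' : ℤ, a' ≠ 0 ∧ QRoot a' b' c' (fastMinusCF x) ∧
      b'^2 - 4*a'*c' = b^2 - 4*a*c ∧
      -(b':ℝ)/a' - fastMinusCF x = 1/((⌈x⌉:ℝ) - (-(b:ℝ)/a - x)) := by
  set n := ⌈x⌉ with hn
  have haR : (a:ℝ) ≠ 0 := Int.cast_ne_zero.mpr ha
  have hxn : (n:ℝ) - x ≠ 0 := by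
    have := (fmcf_frac hirr).1; linarith
  set e := -(b:ℝ)/a - x with he'
  have he : Irrational e := conj_irrational hirr a b
  have hen : (n:ℝ) - e ≠ 0 := sub_ne_zero.mpr (Ne.symm ((he.ne_int n)))
  have hb : (b:ℝ) = -(a*(e+x)) := by rw [he']; field_simp; ring
  have hc : (c:ℝ) = a*x*e := by rw [he']; field_simp; linear_combination h
  have hfac : ((a*n^2 + b*n + c : ℤ):ℝ) = a * ((n:ℝ) - x) * ((n:ℝ) - e) := by
    push_cast; rw [hb, hc]; ring
  have ha' : ((a*n^2 + b*n + c : ℤ):ℝ) ≠ 0 := by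
    rw [hfac]; exact mul_ne_zero (mul_ne_zero haR hxn) hen
  refine ⟨a*n^2 + b*n + c, -(2*a*n + b), a, by exact_mod_cast ha', ?_, by push_cast; ring, ?_⟩
  · show (((a*n^2 + b*n + c : ℤ)):ℝ) * (fastMinusCF x)^2 + ((-(2*a*n + b) : ℤ):ℝ) * (fastMinusCF x) + (a:ℝ) = 0
    rw [fastMinusCF, ← hn]
    push_cast
    rw [hb, hc]
    field_simp
    ring
  · rw [fastMinusCF, ← hn]
    rw [hfac]
    push_cast
    rw [hb]
    field_simp
    ring

lemma self_ne_conj {x : ℝ} {a b : ℤ} (ha : a ≠ 0) (hirr : Irrational x) :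
    x ≠ -(b:ℝ)/a - x := by
  intro hxe
  have haR : (a:ℝ) ≠ 0 := Int.cast_ne_zero.mpr ha
  refine hirr ⟨(-b : ℚ)/(2*a), ?_⟩
  have hx2 : x = -(b:ℝ)/(2*a) := by
    field_simp at hxe ⊢
    linarith
  rw [hx2]
  push_cast
  ring

lemma disc_sq {x : ℝ} {a b c : ℤ} (ha : a ≠ 0) (h : QRoot a b c x) :
    (a:ℝ)^2 * (x - (-(b:ℝ)/a - x))^2 = ((b^2 - 4*a*c : ℤ):ℝ) := by
  have haR : (a:ℝ) ≠ 0 := Int.cast_ne_zero.mpr ha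
  push_cast
  field_simp
  ring_nf
  linear_combination (4*(a:ℝ)) * h

/-- bundled: iterate data with fixed discriminant -/
def GoodRep (D : ℤ) (x : ℝ) (a b c : ℤ) : Prop :=
  Irrational x ∧ 1 < x ∧ 0 < a ∧ QRoot a b c x ∧ b^2 - 4*a*c = D

lemma normalizeRep {x : ℝ} (hirr : Irrational x) (hx : 1 < x) {a b c : ℤ} (ha : a ≠ 0)
    (h : QRoot a b c x) :
    ∃ a' b' c' : ℤ, GoodRep (b^2-4*a*c) x a' b' c' ∧ -(b':ℝ)/a' = -(b:ℝ)/a := by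
  have haR : (a:ℝ) ≠ 0 := Int.cast_ne_zero.mpr ha
  rcases lt_or_gt_of_ne ha with hneg | hpos
  · refine ⟨-a, -b, -c, ⟨hirr, hx, by omega, ?_, by ring⟩, ?_⟩
    · show ((-a : ℤ):ℝ)*x^2 + ((-b:ℤ):ℝ)*x + ((-c:ℤ):ℝ) = 0
      push_cast
      linear_combination -h
    · push_cast
      rw [neg_div_neg_eq, neg_div]
  · exact ⟨a, b, c, ⟨hirr, hx, hpos, h, rfl⟩, rfl⟩

lemma step_good {x : ℝ} {D : ℤ} {a b c : ℤ} (h : GoodRep D x a b c) :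
    ∃ a' b' c' : ℤ, GoodRep D (fastMinusCF x) a' b' c' := by
  obtain ⟨hirr, hx, hapos, hroot, hD⟩ := h
  obtain ⟨a1, b1, c1, ha1, hr1, hD1, -⟩ := step_lemma hirr hx (by omega : a ≠ 0) hroot
  obtain ⟨a2, b2, c2, hg2, -⟩ :=
    normalizeRep (fmcf_irrational hirr) (fmcf_gt_one hirr) ha1 hr1
  rw [hD1, hD] at hg2
  exact ⟨a2, b2, c2, hg2⟩

lemma iterate_rep {x : ℝ} {D : ℤ} (h0 : ∃ a b c, GoodRep D x a b c) :
    ∀ k, ∃ t : ℤ × ℤ × ℤ, GoodRep D (fastMinusCF^[k] x) t.1 t.2.1 t.2.2 := by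
  intro k
  induction k with
  | zero => obtain ⟨a,b,c,h⟩ := h0; exact ⟨(a,b,c), h⟩
  | succ k ih =>
    obtain ⟨t, ht⟩ := ih
    rw [Function.iterate_succ_apply']
    obtain ⟨a',b',c',h'⟩ := step_good ht
    exact ⟨(a',b',c'), h'⟩

/-- conjugate of `S x` in terms of conjugate of `x`, for arbitrary reps. -/
lemma conj_step {x : ℝ} {a b c a' b' c' : ℤ} (hirr : Irrational x) (hx : 1 < x)
    (ha : a ≠ 0) (h : QRoot a b c x) (ha' : a' ≠ 0) (h' : QRoot a' b' c' (fastMinusCF x)) :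
    -(b':ℝ)/a' - fastMinusCF x = 1/((⌈x⌉:ℝ) - (-(b:ℝ)/a - x)) := by
  obtain ⟨a2, b2, c2, ha2, hr2, -, hconj2⟩ := step_lemma hirr hx ha h
  rw [conj_unique (fmcf_irrational hirr) ha' ha2 h' hr2]
  exact hconj2

/-- if the conjugate is `< 1`, the next conjugate is in `(0,1)`. -/
lemma conj_next {x : ℝ} (hx : 1 < x) {e f : ℝ} (he : e < 1)
    (hf : f = 1/((⌈x⌉:ℝ) - e)) : 0 < f ∧ f < 1 := by
  have h2 : (2:ℝ) ≤ (⌈x⌉:ℝ) := by exact_mod_cast ceil_ge_two hx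
  have hgt : 1 < (⌈x⌉:ℝ) - e := by linarith
  constructor
  · rw [hf]; positivity
  · rw [hf, div_lt_one (by linarith)]; linarith

lemma red_bounds {x : ℝ} {D a b c : ℤ} (h : GoodRep D x a b c)
    (h0 : 0 < -(b:ℝ)/a - x) (h1 : -(b:ℝ)/a - x < 1) :
    1 ≤ a ∧ a ≤ D ∧ -D ≤ b ∧ b ≤ -1 ∧ 1 ≤ c ∧ c ≤ D := by
  obtain ⟨hirr, hx, hapos, hroot, hD⟩ := h
  have haR : (a:ℝ) ≠ 0 := Int.cast_ne_zero.mpr (by omega)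
  have haRpos : (0:ℝ) < a := by exact_mod_cast hapos
  set e := -(b:ℝ)/a - x with he'
  have hb : (b:ℝ) = -(a*(e+x)) := by rw [he']; field_simp; ring
  have hc : (c:ℝ) = a*x*e := by rw [he']; field_simp; linear_combination hroot
  have hcpos : 0 < c := by
    have : (0:ℝ) < (c:ℝ) := by rw [hc]; positivity
    exact_mod_cast this
  have habc : a + b + c ≤ -1 := by
    have hr : ((a + b + c : ℤ):ℝ) = a*(1-x)*(1-e) := by push_cast; rw [hb, hc]; ring
    have hneg : ((a + b + c : ℤ):ℝ) < 0 := by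
      rw [hr]
      have := mul_pos (mul_pos haRpos (by linarith : (0:ℝ) < x - 1)) (by linarith : (0:ℝ) < 1 - e)
      nlinarith
    have : (a + b + c : ℤ) < 0 := by exact_mod_cast hneg
    omega
  have hkey : -b + a + c ≤ D := by
    nlinarith [mul_nonneg (by omega : (0:ℤ) ≤ -b - a - c - 1) (by omega : (0:ℤ) ≤ -b + a + c),
      sq_nonneg (a - c)]
  refine ⟨by omega, by omega, by omega, by omega, by omega, by omega⟩

/-- unique root greater than 1 when the conjugate is < 1 -/
lemma root_unique {u v : ℝ} {a b c : ℤ} (ha : 0 < a) (hu : QRoot a b c u) (hv : QRoot a b c v)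
    (hu1 : 1 < u) (hv1 : 1 < v) (huc : -(b:ℝ)/a - u < 1) : u = v := by
  by_contra hne
  have haR : (a:ℝ) ≠ 0 := Int.cast_ne_zero.mpr (by omega)
  have hsum : (a:ℝ) * (u + v) + b = 0 := by
    have hfac : ((a:ℝ) * (u + v) + b) * (u - v) = 0 := by linear_combination hu - hv
    rcases mul_eq_zero.mp hfac with h | h
    · exact h
    · exact absurd (by linarith [sub_eq_zero.mp h]) hne
  have : v = -(b:ℝ)/a - u := by field_simp; linarith
  rw [this] at hv1
  linarith

/-- injectivity of the map on reduced quadratic irrationals -/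
lemma S_inj {u v : ℝ} (hiu : Irrational u) (hiv : Irrational v) (hu1 : 1 < u) (hv1 : 1 < v)
    (hu : ∃ a b c : ℤ, a ≠ 0 ∧ QRoot a b c u ∧ 0 < -(b:ℝ)/a - u ∧ -(b:ℝ)/a - u < 1)
    (hv : ∃ a b c : ℤ, a ≠ 0 ∧ QRoot a b c v ∧ 0 < -(b:ℝ)/a - v ∧ -(b:ℝ)/a - v < 1)
    (heq : fastMinusCF u = fastMinusCF v) : u = v := by
  obtain ⟨au, bu, cu, hau, hru, hu0, hu1'⟩ := hu
  obtain ⟨av, bv, cv, hav, hrv, hv0, hv1'⟩ := hv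
  obtain ⟨a1, b1, c1, ha1, hr1, -, hc1⟩ := step_lemma hiu hu1 hau hru
  obtain ⟨a2, b2, c2, ha2, hr2, -, hc2⟩ := step_lemma hiv hv1 hav hrv
  rw [heq] at hr1 hc1
  have hcc : (1:ℝ)/((⌈u⌉:ℝ) - (-(bu:ℝ)/au - u)) = 1/((⌈v⌉:ℝ) - (-(bv:ℝ)/av - v)) := by
    rw [← hc1, ← hc2]
    rw [conj_unique (fmcf_irrational hiv) ha1 ha2 hr1 hr2]
  have hdu : (0:ℝ) < (⌈u⌉:ℝ) - (-(bu:ℝ)/au - u) := by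
    have h2 : (2:ℝ) ≤ (⌈u⌉:ℝ) := by exact_mod_cast ceil_ge_two hu1
    linarith
  have hdv : (0:ℝ) < (⌈v⌉:ℝ) - (-(bv:ℝ)/av - v) := by
    have h2 : (2:ℝ) ≤ (⌈v⌉:ℝ) := by exact_mod_cast ceil_ge_two hv1
    linarith
  have hden : (⌈u⌉:ℝ) - (-(bu:ℝ)/au - u) = (⌈v⌉:ℝ) - (-(bv:ℝ)/av - v) := by
    have := congrArg (fun t => 1/t) hcc
    simpa [one_div_one_div] using this
  have hceil : ⌈u⌉ = ⌈v⌉ := by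
    have h1 : ((⌈u⌉:ℤ):ℝ) - ((⌈v⌉:ℤ):ℝ) < 1 := by linarith
    have h2 : ((⌈v⌉:ℤ):ℝ) - ((⌈u⌉:ℤ):ℝ) < 1 := by linarith
    have h1' : (⌈u⌉:ℤ) - ⌈v⌉ < 1 := by exact_mod_cast h1
    have h2' : (⌈v⌉:ℤ) - ⌈u⌉ < 1 := by exact_mod_cast h2
    omega
  have hfu := fmcf_frac hiu
  have hfv := fmcf_frac hiv
  have : (⌈u⌉:ℝ) - u = (⌈v⌉:ℝ) - v := by
    have h1 : (1:ℝ)/((⌈u⌉:ℝ) - u) = 1/((⌈v⌉:ℝ) - v) := heq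
    have := congrArg (fun t => 1/t) h1
    simpa [one_div_one_div] using this
  have : ((⌈u⌉:ℤ):ℝ) - u = ((⌈v⌉:ℤ):ℝ) - v := this
  rw [hceil] at this
  linarith

set_option maxHeartbeats 1000000 in
/-- A real quadratic irrational `x > 1` (an irrational root of
`a x² + b x + c = 0` with integer coefficients, `a ≠ 0`) is purely periodic under
the fast minus continued fraction map if and only if it is reduced, i.e.
`x > 1 > x' > 0`, where `x' = −b/a − x` is its Galois conjugate. -/
theorem stmt_10 (x : ℝ) (hirr : Irrational x)
    (a b c : ℤ) (ha : a ≠ 0)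
    (hroot : (a : ℝ) * x ^ 2 + (b : ℝ) * x + (c : ℝ) = 0)
    (hx : 1 < x) :
    (∃ n : ℕ, 0 < n ∧ fastMinusCF^[n] x = x) ↔
      (1 < x ∧ -(b : ℝ) / (a : ℝ) - x < 1 ∧ 0 < -(b : ℝ) / (a : ℝ) - x) := by
  have hrootQ : QRoot a b c x := hroot
  obtain ⟨a0, b0, c0, hg0, hcj0⟩ := normalizeRep hirr hx ha hrootQ
  obtain ⟨f, hf⟩ : ∃ f : ℕ → ℤ × ℤ × ℤ, ∀ k,
      GoodRep (b^2-4*a*c) (fastMinusCF^[k] x) (f k).1 (f k).2.1 (f k).2.2 := by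
    have := iterate_rep (x := x) (D := b^2-4*a*c) ⟨a0, b0, c0, hg0⟩
    exact ⟨fun k => (this k).choose, fun k => (this k).choose_spec⟩
  set D := b^2 - 4*a*c with hD
  set X : ℕ → ℝ := fun k => fastMinusCF^[k] x with hXdef
  set E : ℕ → ℝ := fun k => -((f k).2.1 : ℝ)/((f k).1) - X k with hEdef
  have hXs : ∀ k, X (k+1) = fastMinusCF (X k) := fun k => Function.iterate_succ_apply' _ _ _
  have hfirr : ∀ k, Irrational (X k) := fun k => (hf k).1
  have hfgt : ∀ k, 1 < X k := fun k => (hf k).2.1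
  have hfpos : ∀ k, 0 < (f k).1 := fun k => (hf k).2.2.1
  have hfroot : ∀ k, QRoot (f k).1 (f k).2.1 (f k).2.2 (X k) := fun k => (hf k).2.2.2.1
  have hfD : ∀ k, (f k).2.1^2 - 4*(f k).1*(f k).2.2 = D := fun k => (hf k).2.2.2.2
  have hEstep : ∀ k, E (k+1) = 1/((⌈X k⌉:ℝ) - E k) := by
    intro k
    show -((f (k+1)).2.1 : ℝ)/((f (k+1)).1) - X (k+1) = _
    rw [hXs]
    exact conj_step (hfirr k) (hfgt k) (by have := hfpos k; omega) (hfroot k)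
      (by have := hfpos (k+1); omega) ((hXs k) ▸ hfroot (k+1))
  have hEirr : ∀ k, Irrational (E k) := fun k => conj_irrational (hfirr k) _ _
  have hE0 : E 0 = -(b:ℝ)/a - x := by
    show -((f 0).2.1 : ℝ)/((f 0).1) - X 0 = _
    have hX0 : X 0 = x := rfl
    rw [hX0]
    exact conj_unique hirr (by have := hfpos 0; omega) ha (hX0 ▸ hfroot 0) hrootQ
  have hX0 : X 0 = x := rfl
  have hXval : ∀ k, X k = fastMinusCF^[k] x := fun _ => rfl
  have hEval : ∀ k, E k = -((f k).2.1 : ℝ)/((f k).1) - X k := fun _ => rfl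
  have hXiter : ∀ r s : ℕ, fastMinusCF^[r] (X s) = X (r + s) := by
    intro r s
    exact (Function.iterate_add_apply fastMinusCF r s x).symm
  have hXrec : ∀ k, X (k+1) = 1/((⌈X k⌉:ℝ) - X k) := by
    intro k; rw [hXs]; rfl
  clear_value X E
  clear hXdef hEdef
  constructor
  · -- periodic → reduced
    rintro ⟨n, hn, hper⟩
    have key : ∃ k, E k < 1 := by
      by_contra hall
      push_neg at hall
      have hgt : ∀ k, 1 < E k := by
        intro k
        have hne : E k ≠ 1 := by have := (hEirr k).ne_int 1; simpa using this
        exact lt_of_le_of_ne (hall k) (Ne.symm hne)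
      have hAdec : ∀ k, (f (k+1)).1 < (f k).1 := by
        intro k
        have hceil2 : (2:ℝ) ≤ (⌈X k⌉:ℝ) := by exact_mod_cast ceil_ge_two (hfgt k)
        obtain ⟨hfr1, hfr2⟩ := fmcf_frac (hfirr k)
        have hEs := hEstep k
        have hpos : 0 < (⌈X k⌉:ℝ) - E k := by
          by_contra hle
          push_neg at hle
          have h1 : 1/((⌈X k⌉:ℝ) - E k) ≤ 0 :=
            div_nonpos_of_nonneg_of_nonpos (by norm_num) hle
          rw [← hEs] at h1
          linarith [hgt (k+1)]
        have hlt1 : (⌈X k⌉:ℝ) - E k < 1 := by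
          by_contra hge
          push_neg at hge
          have h1 : 1/((⌈X k⌉:ℝ) - E k) ≤ 1 := by
            rw [div_le_one hpos]; linarith
          rw [← hEs] at h1
          linarith [hgt (k+1)]
        have hdrec : X (k+1) - E (k+1)
            = (X k - E k) / (((⌈X k⌉:ℝ) - X k) * ((⌈X k⌉:ℝ) - E k)) := by
          rw [hXrec k, hEs]
          field_simp
          ring
        have hsqk : ((f k).1:ℝ)^2 * (X k - E k)^2 = (D:ℝ) := by
          have h1 := disc_sq (x := X k) (by have := hfpos k; omega) (hfroot k)
          rw [hfD k] at h1
          rw [hEval k]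
          exact h1
        have hsqk1 : ((f (k+1)).1:ℝ)^2 * (X (k+1) - E (k+1))^2 = (D:ℝ) := by
          have h1 := disc_sq (x := X (k+1)) (by have := hfpos (k+1); omega) (hfroot (k+1))
          rw [hfD (k+1)] at h1
          rw [hEval (k+1)]
          exact h1
        have hdne : X k - E k ≠ 0 := by
          rw [hEval k]
          exact sub_ne_zero.mpr (self_ne_conj (by have := hfpos k; omega) (hfirr k))
        have hdsq : 0 < (X k - E k)^2 := by positivity
        have hq1 : 0 < ((⌈X k⌉:ℝ) - X k) * ((⌈X k⌉:ℝ) - E k) := mul_pos hfr1 hpos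
        have hq2 : ((⌈X k⌉:ℝ) - X k) * ((⌈X k⌉:ℝ) - E k) < 1 := by nlinarith
        have hqsq : (((⌈X k⌉:ℝ) - X k) * ((⌈X k⌉:ℝ) - E k))^2 < 1 := by nlinarith
        have hinc : (X k - E k)^2 < (X (k+1) - E (k+1))^2 := by
          rw [hdrec, div_pow, lt_div_iff₀ (by positivity)]
          nlinarith
        have hA1pos : (0:ℝ) < ((f (k+1)).1:ℝ) := by exact_mod_cast hfpos (k+1)
        have hApos : (0:ℝ) < ((f k).1:ℝ) := by exact_mod_cast hfpos k
        have h5 : ((f (k+1)).1:ℝ)^2 * (X k - E k)^2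
            < ((f (k+1)).1:ℝ)^2 * (X (k+1) - E (k+1))^2 :=
          mul_lt_mul_of_pos_left hinc (pow_pos hA1pos 2)
        rw [hsqk1, ← hsqk] at h5
        have hAR : ((f (k+1)).1:ℝ)^2 < ((f k).1:ℝ)^2 :=
          lt_of_mul_lt_mul_right (by linarith) (le_of_lt hdsq)
        have hAZ : ((f (k+1)).1)^2 < ((f k).1)^2 := by exact_mod_cast hAR
        nlinarith [hfpos k, hfpos (k+1), hAZ]
      have hdesc : ∀ k : ℕ, (f k).1 ≤ (f 0).1 - k := by
        intro k
        induction k with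
        | zero => simp
        | succ k ih =>
          have := hAdec k
          push_cast at ih ⊢
          omega
      have h1 := hdesc ((f 0).1.toNat)
      have h00 := hfpos 0
      have hlast := hfpos ((f 0).1.toNat)
      rw [Int.toNat_of_nonneg (le_of_lt h00)] at h1
      omega
    obtain ⟨k, hk⟩ := key
    have hredchain : ∀ m : ℕ, 0 < E (k+1+m) ∧ E (k+1+m) < 1 := by
      intro m
      induction m with
      | zero => simpa using conj_next (hfgt k) hk (hEstep k)
      | succ m ih =>
        have h1 : k+1+(m+1) = (k+1+m)+1 := by omega
        rw [h1]
        exact conj_next (hfgt (k+1+m)) ih.2 (hEstep (k+1+m))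
    have hk2 : k+2 ≤ n*(k+2) := Nat.le_mul_of_pos_left _ hn
    set m := n*(k+2) with hm
    have hm0 : k+1 + (m - (k+1)) = m := by omega
    have hred := hredchain (m - (k+1))
    rw [hm0] at hred
    have hXm : X m = x := by
      have h1 := hXiter m 0
      rw [hX0, Nat.add_zero] at h1
      rw [← h1, hm, Function.iterate_mul]
      exact Function.iterate_fixed hper (k+2)
    have hEm : E m = -(b:ℝ)/a - x := by
      rw [hEval m, hXm]
      exact conj_unique hirr (by have := hfpos m; omega) ha (hXm ▸ hfroot m) hrootQ
    rw [hEm] at hred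
    exact ⟨hx, hred.2, hred.1⟩
  · -- reduced → periodic
    rintro ⟨-, hlt, hpos⟩
    have hred : ∀ k, 0 < E k ∧ E k < 1 := by
      intro k
      induction k with
      | zero => rw [hE0]; exact ⟨hpos, hlt⟩
      | succ k ih => exact conj_next (hfgt k) ih.2 (hEstep k)
    have hbd : ∀ k, f k ∈ Set.Icc ((1:ℤ), -D, (1:ℤ)) (D, -1, D) := by
      intro k
      have hfk := hf k
      rw [← hXval k] at hfk
      have hrk := hred k
      rw [hEval k] at hrk
      have hb := red_bounds hfk hrk.1 hrk.2
      simp only [Set.mem_Icc, Prod.le_def]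
      omega
    obtain ⟨i, -, j, -, hij, hfij⟩ :=
      Set.infinite_univ.exists_ne_map_eq_of_mapsTo
        (fun k _ => hbd k : Set.MapsTo f Set.univ (Set.Icc ((1:ℤ), -D, (1:ℤ)) (D, -1, D)))
        (Set.finite_Icc _ _)
    obtain ⟨i, j, hij, hfe⟩ : ∃ i j : ℕ, i < j ∧ f i = f j := by
      rcases lt_or_gt_of_ne hij with h | h
      exacts [⟨i, j, h, hfij⟩, ⟨j, i, h, hfij.symm⟩]
    have hXij : X i = X j := by
      refine root_unique (hfpos i) (hfroot i) ?_ (hfgt i) (hfgt j)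
        (by rw [← hEval i]; exact (hred i).2)
      rw [hfe]
      exact hfroot j
    have hfixi : fastMinusCF^[j-i] (X i) = X i := by
      rw [hXiter (j-i) i]
      have h1 : j - i + i = j := by omega
      rw [h1]
      exact hXij.symm
    have hdown : ∀ t, t ≤ i → fastMinusCF^[j-i] (X (i - t)) = X (i - t) := by
      intro t
      induction t with
      | zero => intro _; simpa using hfixi
      | succ t ih =>
        intro hti
        have hp := ih (by omega)
        set m := i - (t+1) with hmdef
        have hm1 : m + 1 = i - t := by omega
        have hu : fastMinusCF^[j-i] (X m) = X (j-i+m) := hXiter _ _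
        have heq : fastMinusCF (X (j-i+m)) = fastMinusCF (X m) := by
          rw [← hXs (j-i+m), ← hXs m]
          have h2 : j - i + m + 1 = j - i + (m+1) := by omega
          rw [h2, ← hXiter (j-i) (m+1), hm1, hp]
        have := S_inj (hfirr (j-i+m)) (hfirr m) (hfgt (j-i+m)) (hfgt m)
          ⟨(f (j-i+m)).1, (f (j-i+m)).2.1, (f (j-i+m)).2.2,
            by have := hfpos (j-i+m); omega, hfroot (j-i+m),
            (by rw [← hEval (j-i+m)]; exact (hred (j-i+m)).1),
            (by rw [← hEval (j-i+m)]; exact (hred (j-i+m)).2)⟩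
          ⟨(f m).1, (f m).2.1, (f m).2.2,
            by have := hfpos m; omega, hfroot m,
            (by rw [← hEval m]; exact (hred m).1),
            (by rw [← hEval m]; exact (hred m).2)⟩
          heq
        rw [hu, this]
    have hfinal := hdown i (le_refl i)
    rw [Nat.sub_self, hX0] at hfinal
    exact ⟨j - i, by omega, hfinal⟩
end

section
/- Let D ≡ 1 (mod 4) be a positive integer, r an odd integer and N a positive integer with D = r² + 4N, and ν = (r + √D)/(2√D) ∈ ℚ(√D). Then for every ξ = x₁ + ((1+√D)/2)·x₂ with x₁, x₂ ∈ ℚ, one has Tr(ν·ξ²) = y₁² + N·y₂², where y₁ = x₁ + ((r+1)/2)x₂ and y₂ = −x₂, and Tr denotes the trace of ℚ(√D)/ℚ. -/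
/-- Let `D ≡ 1 (mod 4)` be a positive non-square integer, `r` odd and `N > 0` with
`D = r² + 4N`, and `ν = (r + √D)/(2√D) ∈ ℚ(√D)`. Then for every
`ξ = x₁ + ((1+√D)/2)·x₂` with `x₁, x₂ ∈ ℚ` one has
`Tr(ν ξ²) = y₁² + N y₂²`, where `y₁ = x₁ + ((r+1)/2)x₂`, `y₂ = −x₂`, and the trace
is `ν ξ² + ν' ξ'²` with `ν' = (√D − r)/(2√D)`, `ξ' = x₁ + ((1−√D)/2)·x₂`. -/
theorem stmt_18 (D r N : ℤ) (hD : 0 < D) (hns : ¬IsSquare D) (hD4 : D % 4 = 1)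
    (hr : Odd r) (hN : 0 < N) (hDrN : D = r ^ 2 + 4 * N) :
    ∀ x₁ x₂ : ℚ,
      (((r : ℝ) + Real.sqrt (D : ℝ)) / (2 * Real.sqrt (D : ℝ))) *
          ((x₁ : ℝ) + ((1 + Real.sqrt (D : ℝ)) / 2) * (x₂ : ℝ)) ^ 2 +
        ((Real.sqrt (D : ℝ) - (r : ℝ)) / (2 * Real.sqrt (D : ℝ))) *
          ((x₁ : ℝ) + ((1 - Real.sqrt (D : ℝ)) / 2) * (x₂ : ℝ)) ^ 2 =
      ((x₁ : ℝ) + (((r : ℝ) + 1) / 2) * (x₂ : ℝ)) ^ 2 + (N : ℝ) * (-(x₂ : ℝ)) ^ 2 := by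
  intro x₁ x₂
  have hDpos : (0 : ℝ) < (D : ℝ) := by exact_mod_cast hD
  have hs : Real.sqrt (D : ℝ) ^ 2 = (D : ℝ) := Real.sq_sqrt hDpos.le
  have hs0 : Real.sqrt (D : ℝ) ≠ 0 := by positivity
  have hDN : (D : ℝ) = (r : ℝ) ^ 2 + 4 * (N : ℝ) := by exact_mod_cast hDrN
  field_simp
  linear_combination (2 * Real.sqrt (D:ℝ) * (x₂:ℝ)^2) * hs + (2 * Real.sqrt (D:ℝ) * (x₂:ℝ)^2) * hDN
end
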